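/- Let G be a 3-regular graph, N_G the reduction network, and V_sol a vertex cover of G. Let N^E_G be obtained from N_G by deleting the arc w^v_4 r^v_4 for every v in V_sol. Then N^E_G is tree-based: its unique zig-zag decomposition contains no W-fence. -/

import Mathlib

/-- A directed graph with a distinguished root, modelling a phylogenetic network. -/
structure Net (V : Type*) where
  verts : Set V
  root : V
  arcs : Set (V × V)

namespace Net

variable {V : Type*}

/-- In-degree of a vertex. -/
noncomputable def indeg (N : Net V) (v : V) : ℕ := {a ∈ N.arcs | a.2 = v}.ncard

/-- Out-degree of a vertex. -/
noncomputable def outdeg (N : Net V) (v : V) : ℕ := {a ∈ N.arcs | a.1 = v}.ncard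

/-- A leaf: indegree 1, outdegree 0. -/
def IsLeafV (N : Net V) (v : V) : Prop := v ∈ N.verts ∧ N.indeg v = 1 ∧ N.outdeg v = 0

/-- A tree vertex: indegree 1, outdegree 2. -/
def IsTreeV (N : Net V) (v : V) : Prop := v ∈ N.verts ∧ N.indeg v = 1 ∧ N.outdeg v = 2

/-- A reticulation: indegree 2, outdegree 1. -/
def IsReticV (N : Net V) (v : V) : Prop := v ∈ N.verts ∧ N.indeg v = 2 ∧ N.outdeg v = 1

/-- The arc relation of the network. -/
def arcRel (N : Net V) (u w : V) : Prop := (u, w) ∈ N.arcs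

/-- `N` is a rooted binary phylogenetic network. -/
def IsPhylo (N : Net V) : Prop :=
  N.verts.Finite ∧ N.arcs.Finite ∧ N.root ∈ N.verts ∧
  (∀ a ∈ N.arcs, a.1 ∈ N.verts ∧ a.2 ∈ N.verts) ∧
  N.indeg N.root = 0 ∧ N.outdeg N.root = 1 ∧
  (∀ v ∈ N.verts, v = N.root ∨ N.IsTreeV v ∨ N.IsReticV v ∨ N.IsLeafV v) ∧
  (∀ v : V, ¬ Relation.TransGen N.arcRel v v)

end Net

open Net
namespace Net

variable {V : Type*}

/-- A zig-zag trail in the arc set `A`: a nonempty sequence of distinct arcs of `A`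
in which consecutive arcs share a tail or share a head. -/
def IsZigZag (A : Set (V × V)) (l : List (V × V)) : Prop :=
  l ≠ [] ∧ l.Nodup ∧ (∀ a ∈ l, a ∈ A) ∧
    l.Chain' (fun a b => a.1 = b.1 ∨ a.2 = b.2)

/-- A maximal zig-zag trail: not properly contained (as an infix, up to reversal)
in any longer zig-zag trail in `A`. -/
def IsMaximalZigZag (A : Set (V × V)) (l : List (V × V)) : Prop :=
  IsZigZag A l ∧
    ∀ l' : List (V × V), IsZigZag A l' → (l <:+: l' ∨ l <:+: l'.reverse) →
      l'.length = l.length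

/-- The non-root arcs of `N`. -/
def nonRootArcs (N : Net V) : Set (V × V) := {a ∈ N.arcs | a.1 ≠ N.root}

/-- A zig-zag decomposition: a partition of all non-root arcs of `N` into
(arc sets of) maximal zig-zag trails. -/
def IsZigZagDecomp (N : Net V) (D : Set (Set (V × V))) : Prop :=
  (∀ B ∈ D, ∃ l : List (V × V),
      IsMaximalZigZag N.nonRootArcs l ∧ {a | a ∈ l} = B) ∧
  (∀ B ∈ D, ∀ B' ∈ D, B ≠ B' → Disjoint B B') ∧
  (∀ B ∈ D, B.Nonempty) ∧
  ⋃₀ D = N.nonRootArcs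

/-- A crown: even length at least 4, closing up (first and last arcs share
a tail or share a head). -/
def IsCrown (l : List (V × V)) : Prop :=
  4 ≤ l.length ∧ Even l.length ∧
    ∃ a b : V × V, l.head? = some a ∧ l.getLast? = some b ∧ (a.1 = b.1 ∨ a.2 = b.2)

/-- An M-fence: even length at least 2, not a crown, both end tails tree vertices. -/
def IsMFence (N : Net V) (l : List (V × V)) : Prop :=
  2 ≤ l.length ∧ Even l.length ∧ ¬ IsCrown l ∧
    ∃ a b : V × V, l.head? = some a ∧ l.getLast? = some b ∧
      N.IsTreeV a.1 ∧ N.IsTreeV b.1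

/-- An N-fence: odd length, exactly one of the two end tails is a reticulation. -/
def IsNFence (N : Net V) (l : List (V × V)) : Prop :=
  Odd l.length ∧
    ∃ a b : V × V, l.head? = some a ∧ l.getLast? = some b ∧
      ((N.IsReticV a.1 ∧ ¬ N.IsReticV b.1) ∨ (¬ N.IsReticV a.1 ∧ N.IsReticV b.1))

/-- A W-fence: even length at least 2, both end tails reticulations. -/
def IsWFence (N : Net V) (l : List (V × V)) : Prop :=
  2 ≤ l.length ∧ Even l.length ∧
    ∃ a b : V × V, l.head? = some a ∧ l.getLast? = some b ∧
      N.IsReticV a.1 ∧ N.IsReticV b.1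

end Net
namespace Net

variable {V : Type*}

/-- An arc is deletable if its tail has outdegree 2 and its head is a reticulation. -/
def Deletable (N : Net V) (a : V × V) : Prop :=
  a ∈ N.arcs ∧ N.outdeg a.1 = 2 ∧ N.IsReticV a.2

/-- Deleting a set of arcs from a network. -/
def delArcs (N : Net V) (A : Set (V × V)) : Net V :=
  ⟨N.verts, N.root, N.arcs \ A⟩

/-- One suppression step: a vertex of indegree 1 and outdegree 1 is removed
and its two incident arcs are replaced by one arc. -/
def SuppStep (N N' : Net V) : Prop :=
  ∃ v p c : V, v ∈ N.verts ∧ N.indeg v = 1 ∧ N.outdeg v = 1 ∧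
    (p, v) ∈ N.arcs ∧ (v, c) ∈ N.arcs ∧
    N'.root = N.root ∧ N'.verts = N.verts \ {v} ∧
    N'.arcs = (N.arcs \ {(p, v), (v, c)}) ∪ {(p, c)}

/-- `N'` is the fully simplified version of `N`: obtained by repeated
suppressions until no vertex of indegree 1 and outdegree 1 remains. -/
def SimplifiesTo (N N' : Net V) : Prop :=
  Relation.ReflTransGen SuppStep N N' ∧
    ∀ v ∈ N'.verts, ¬ (N'.indeg v = 1 ∧ N'.outdeg v = 1)

end Net
/-- Vertices of the reduction network `N_G`: the global root, the caterpillar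
tree vertices `s_i`, and for each gadget the vertices `ρ^v`, `m^v_i`, `r^v_i`,
`w^v_i` and the leaves `l^v_i`. -/
inductive RV where
  | root
  | s (i : ℕ)
  | rho (v : ℕ)
  | m (v : ℕ) (i : ℕ)
  | r (v : ℕ) (i : ℕ)
  | w (v : ℕ) (i : ℕ)
  | lf (v : ℕ) (i : ℕ)
deriving DecidableEq

namespace RV

/-- The arcs of the gadget `Gad(v)`: the principal `N`-fence of length 15,
the leaves below `r^v_1,…,r^v_4`, and the attachment structure
`m^v_1,…,m^v_4, ρ^v`. -/
def gadgetArcs (v : ℕ) : Set (RV × RV) :=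
  {(RV.r v 0, RV.r v 1)} ∪
  {p | ∃ i : ℕ, 1 ≤ i ∧ i ≤ 6 ∧
      (p = (RV.w v i, RV.r v i) ∨ p = (RV.w v i, RV.r v (i + 1)))} ∪
  {(RV.w v 7, RV.r v 7), (RV.w v 7, RV.lf v 5)} ∪
  {p | ∃ i : ℕ, 1 ≤ i ∧ i ≤ 4 ∧ p = (RV.r v i, RV.lf v i)} ∪
  {(RV.m v 1, RV.r v 0), (RV.m v 1, RV.w v 4),
   (RV.m v 2, RV.m v 1), (RV.m v 2, RV.w v 5),
   (RV.m v 3, RV.m v 2), (RV.m v 3, RV.w v 6),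
   (RV.m v 4, RV.m v 3), (RV.m v 4, RV.r v 0),
   (RV.rho v, RV.m v 4), (RV.rho v, RV.w v 7)}

/-- The arcs connecting the gadgets below the global root `ρ` via the
caterpillar `s_0, …, s_{g-2}` (0-based indexing of the `g` gadgets). -/
def connectArcs (g : ℕ) : Set (RV × RV) :=
  {(RV.root, RV.s 0)} ∪
  {p | ∃ i : ℕ, i + 3 ≤ g ∧ p = (RV.s i, RV.s (i + 1))} ∪
  {p | ∃ i : ℕ, i + 2 ≤ g ∧ p = (RV.s i, RV.rho i)} ∪
  {(RV.s (g - 2), RV.rho (g - 1))}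

/-- The inter-gadget arcs: for each edge `uv` of `G`, the arcs
`r^u_{τ_u(v)} w^v_{π_v(u)}` and `r^v_{τ_v(u)} w^u_{π_u(v)}`. -/
def interArcs {g : ℕ} (G : SimpleGraph (Fin g)) (π τ : Fin g → Fin g → ℕ) :
    Set (RV × RV) :=
  {p | ∃ u v : Fin g, G.Adj u v ∧ p = (RV.r u (τ u v), RV.w v (π v u))}

/-- All arcs of the reduction network `N_G`. -/
def NGarcs {g : ℕ} (G : SimpleGraph (Fin g)) (π τ : Fin g → Fin g → ℕ) :
    Set (RV × RV) :=
  connectArcs g ∪ (⋃ v : Fin g, gadgetArcs v) ∪ interArcs G π τ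

/-- The reduction network `N_G`. -/
def NG {g : ℕ} (G : SimpleGraph (Fin g)) (π τ : Fin g → Fin g → ℕ) : Net RV :=
  ⟨{RV.root} ∪ {x | ∃ a ∈ NGarcs G π τ, x = a.1 ∨ x = a.2}, RV.root, NGarcs G π τ⟩

/-- The extended principal part of `Gad(v)`: the principal `N`-fence together
with the arcs `m^v_1 r^v_0` and `m^v_4 r^v_0`. -/
def extPrincipal (v : ℕ) : Set (RV × RV) :=
  {(RV.r v 0, RV.r v 1)} ∪
  {p | ∃ i : ℕ, 1 ≤ i ∧ i ≤ 6 ∧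
      (p = (RV.w v i, RV.r v i) ∨ p = (RV.w v i, RV.r v (i + 1)))} ∪
  {(RV.w v 7, RV.r v 7), (RV.w v 7, RV.lf v 5)} ∪
  {(RV.m v 1, RV.r v 0), (RV.m v 4, RV.r v 0)}

/-- `G` is 3-regular. -/
def ThreeRegular {g : ℕ} (G : SimpleGraph (Fin g)) : Prop :=
  ∀ v : Fin g, (G.neighborSet v).ncard = 3

/-- The labelling functions `π_v` are bijections from the neighbours of `v`
onto `{1,2,3}`, and the `τ_v` onto `{5,6,7}`. -/
def GoodBijections {g : ℕ} (G : SimpleGraph (Fin g)) (π τ : Fin g → Fin g → ℕ) : Prop :=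
  ∀ v : Fin g, Set.BijOn (π v) (G.neighborSet v) {1, 2, 3} ∧
    Set.BijOn (τ v) (G.neighborSet v) {5, 6, 7}

end RV
namespace TB
open RV Net

variable {g : ℕ}

def stArcs (G : SimpleGraph (Fin g)) (π τ : Fin g → Fin g → ℕ)
    (Vsol A B : Set (Fin g)) : Set (RV × RV) :=
  {p | p = (RV.root, RV.s 0)
    ∨ (∃ i, i+3 ≤ g ∧ p = (RV.s i, RV.s (i+1)))
    ∨ (∃ i, i+2 ≤ g ∧ p = (RV.s i, RV.rho i))
    ∨ p = (RV.s (g-2), RV.rho (g-1))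
    ∨ (∃ v : Fin g, p = (RV.r v 0, RV.r v 1))
    ∨ (∃ v : Fin g, ∃ i, 1 ≤ i ∧ i ≤ 6 ∧ p = (RV.w v i, RV.r v i) ∧ ¬(i = 4 ∧ v ∈ Vsol))
    ∨ (∃ v : Fin g, ∃ i, 1 ≤ i ∧ i ≤ 6 ∧ p = (RV.w v i, RV.r v (i+1)) ∧
        ¬(i = 4 ∧ v ∈ A) ∧ ¬(i = 3 ∧ v ∈ B))
    ∨ (∃ v : Fin g, p = (RV.w v 7, RV.r v 7) ∨ p = (RV.w v 7, RV.lf v 5))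
    ∨ (∃ v : Fin g, ∃ i, 1 ≤ i ∧ i ≤ 4 ∧ p = (RV.r v i, RV.lf v i) ∧ ¬(i = 4 ∧ v ∈ B))
    ∨ (∃ v : Fin g, p = (RV.m v 1, RV.r v 0) ∨ (p = (RV.m v 1, RV.w v 4) ∧ v ∉ A)
        ∨ p = (RV.m v 2, RV.m v 1) ∨ p = (RV.m v 2, RV.w v 5)
        ∨ p = (RV.m v 3, RV.m v 2) ∨ p = (RV.m v 3, RV.w v 6)
        ∨ p = (RV.m v 4, RV.m v 3) ∨ p = (RV.m v 4, RV.r v 0)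
        ∨ p = (RV.rho v, RV.m v 4) ∨ p = (RV.rho v, RV.w v 7))
    ∨ (∃ u v : Fin g, G.Adj u v ∧ p = (RV.r u (τ u v), RV.w v (π v u)))
    ∨ (∃ v : Fin g, v ∈ A ∧ p = (RV.m v 1, RV.r v 5))
    ∨ (∃ v : Fin g, v ∈ B ∧ p = (RV.w v 3, RV.lf v 4))}

def stVerts (G : SimpleGraph (Fin g)) (π τ : Fin g → Fin g → ℕ)
    (A B : Set (Fin g)) : Set RV :=
  (NG G π τ).verts \
    ((fun v : Fin g => RV.w (v:ℕ) 4) '' A ∪ (fun v : Fin g => RV.r (v:ℕ) 4) '' B)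

section
variable {G : SimpleGraph (Fin g)} {π τ : Fin g → Fin g → ℕ} {Vsol A B : Set (Fin g)}


/-- sample elimination lemma U1 -/
lemma U1 (hbij : GoodBijections G π τ) {b : RV × RV} {v : Fin g} (hb : b ∈ stArcs G π τ Vsol A B)
    (h : b.1 = RV.r v 0) : b = (RV.r v 0, RV.r v 1) := by
  rcases hb with rfl | ⟨i, hig, rfl⟩ | ⟨i, hig, rfl⟩ | rfl | ⟨v', rfl⟩ |
    ⟨v', i, h1, h6, rfl, hc⟩ | ⟨v', i, h1, h6, rfl, hcA, hcB⟩ | ⟨v', rfl | rfl⟩ |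
    ⟨v', i, h1, h4, rfl, hc⟩ |
    ⟨v', rfl | ⟨rfl, hA⟩ | rfl | rfl | rfl | rfl | rfl | rfl | rfl | rfl⟩ |
    ⟨u, v', hadj, rfl⟩ | ⟨v', hA, rfl⟩ | ⟨v', hB, rfl⟩ <;>
    simp_all
  · -- interarc case: τ u v' = 0 impossible
    have := (hbij u).2.1 (by exact hadj)
    simp only [h.2] at this
    simp at this
lemma U2 {b : RV × RV} {v : Fin g} (hb : b ∈ stArcs G π τ Vsol A B)
    (h : b.2 = RV.r v 1) : b = (RV.r v 0, RV.r v 1) ∨ b = (RV.w v 1, RV.r v 1) := by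
  rcases hb with rfl | ⟨i, hig, rfl⟩ | ⟨i, hig, rfl⟩ | rfl | ⟨v', rfl⟩ |
    ⟨v', i, h1, h6, rfl, hc⟩ | ⟨v', i, h1, h6, rfl, hcA, hcB⟩ | ⟨v', rfl | rfl⟩ |
    ⟨v', i, h1, h4, rfl, hc⟩ |
    ⟨v', rfl | ⟨rfl, hA⟩ | rfl | rfl | rfl | rfl | rfl | rfl | rfl | rfl⟩ |
    ⟨u, v', hadj, rfl⟩ | ⟨v', hA, rfl⟩ | ⟨v', hB, rfl⟩ <;>
    simp_all <;> omega

lemma U3 {b : RV × RV} {v : Fin g} {i : ℕ} (hb : b ∈ stArcs G π τ Vsol A B)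
    (h1i : 1 ≤ i) (h6i : i ≤ 6) (h : b.1 = RV.w v i) :
    (b = (RV.w v i, RV.r v i) ∧ ¬(i = 4 ∧ v ∈ Vsol)) ∨
    (b = (RV.w v i, RV.r v (i+1)) ∧ ¬(i = 4 ∧ v ∈ A) ∧ ¬(i = 3 ∧ v ∈ B)) ∨
    (i = 3 ∧ v ∈ B ∧ b = (RV.w v 3, RV.lf v 4)) := by
  rcases hb with rfl | ⟨i', hig, rfl⟩ | ⟨i', hig, rfl⟩ | rfl | ⟨v', rfl⟩ |
    ⟨v', i', h1, h6, rfl, hc⟩ | ⟨v', i', h1, h6, rfl, hcA, hcB⟩ | ⟨v', rfl | rfl⟩ |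
    ⟨v', i', h1, h4, rfl, hc⟩ |
    ⟨v', rfl | ⟨rfl, hA⟩ | rfl | rfl | rfl | rfl | rfl | rfl | rfl | rfl⟩ |
    ⟨u, v', hadj, rfl⟩ | ⟨v', hA, rfl⟩ | ⟨v', hB, rfl⟩ <;>
    simp_all [Fin.val_inj] <;> omega
lemma U4 {b : RV × RV} {v : Fin g} (hb : b ∈ stArcs G π τ Vsol A B)
    (h : b.1 = RV.w v 7) : b = (RV.w v 7, RV.r v 7) ∨ b = (RV.w v 7, RV.lf v 5) := by
  rcases hb with rfl | ⟨i', hig, rfl⟩ | ⟨i', hig, rfl⟩ | rfl | ⟨v', rfl⟩ |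
    ⟨v', i', h1, h6, rfl, hc⟩ | ⟨v', i', h1, h6, rfl, hcA, hcB⟩ | ⟨v', rfl | rfl⟩ |
    ⟨v', i', h1, h4, rfl, hc⟩ |
    ⟨v', rfl | ⟨rfl, hA⟩ | rfl | rfl | rfl | rfl | rfl | rfl | rfl | rfl⟩ |
    ⟨u, v', hadj, rfl⟩ | ⟨v', hA, rfl⟩ | ⟨v', hB, rfl⟩ <;>
    simp_all [Fin.val_inj] <;> omega

lemma U5 {b : RV × RV} {v : Fin g} {i : ℕ} (hb : b ∈ stArcs G π τ Vsol A B)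
    (h1i : 2 ≤ i) (h6i : i ≤ 7) (h : b.2 = RV.r v i) :
    (b = (RV.w v (i-1), RV.r v i) ∧ ¬(i-1 = 4 ∧ v ∈ A) ∧ ¬(i-1 = 3 ∧ v ∈ B)) ∨
    (b = (RV.w v i, RV.r v i) ∧ ¬(i = 4 ∧ v ∈ Vsol)) ∨
    (i = 5 ∧ v ∈ A ∧ b = (RV.m v 1, RV.r v 5)) := by
  rcases hb with rfl | ⟨i', hig, rfl⟩ | ⟨i', hig, rfl⟩ | rfl | ⟨v', rfl⟩ |
    ⟨v', i', h1, h6, rfl, hc⟩ | ⟨v', i', h1, h6, rfl, hcA, hcB⟩ | ⟨v', rfl | rfl⟩ |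
    ⟨v', i', h1, h4, rfl, hc⟩ |
    ⟨v', rfl | ⟨rfl, hA⟩ | rfl | rfl | rfl | rfl | rfl | rfl | rfl | rfl⟩ |
    ⟨u, v', hadj, rfl⟩ | ⟨v', hA, rfl⟩ | ⟨v', hB, rfl⟩ <;>
    simp_all [Fin.val_inj] <;> try omega
  exact Or.inl ⟨by omega, fun h5 => hcA (by omega), fun h4 => hcB (by omega)⟩

lemma U6 {b : RV × RV} {v : Fin g} {i : ℕ} (hb : b ∈ stArcs G π τ Vsol A B)
    (h1i : 1 ≤ i) (h4i : i ≤ 4) (h : b.2 = RV.lf v i) :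
    (b = (RV.r v i, RV.lf v i) ∧ ¬(i = 4 ∧ v ∈ B)) ∨
    (i = 4 ∧ v ∈ B ∧ b = (RV.w v 3, RV.lf v 4)) := by
  rcases hb with rfl | ⟨i', hig, rfl⟩ | ⟨i', hig, rfl⟩ | rfl | ⟨v', rfl⟩ |
    ⟨v', i', h1, h6, rfl, hc⟩ | ⟨v', i', h1, h6, rfl, hcA, hcB⟩ | ⟨v', rfl | rfl⟩ |
    ⟨v', i', h1, h4, rfl, hc⟩ |
    ⟨v', rfl | ⟨rfl, hA⟩ | rfl | rfl | rfl | rfl | rfl | rfl | rfl | rfl⟩ |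
    ⟨u, v', hadj, rfl⟩ | ⟨v', hA, rfl⟩ | ⟨v', hB, rfl⟩ <;>
    simp_all [Fin.val_inj] <;> omega

lemma U7 {b : RV × RV} {v : Fin g} (hb : b ∈ stArcs G π τ Vsol A B)
    (h : b.2 = RV.lf v 5) : b = (RV.w v 7, RV.lf v 5) := by
  rcases hb with rfl | ⟨i', hig, rfl⟩ | ⟨i', hig, rfl⟩ | rfl | ⟨v', rfl⟩ |
    ⟨v', i', h1, h6, rfl, hc⟩ | ⟨v', i', h1, h6, rfl, hcA, hcB⟩ | ⟨v', rfl | rfl⟩ |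
    ⟨v', i', h1, h4, rfl, hc⟩ |
    ⟨v', rfl | ⟨rfl, hA⟩ | rfl | rfl | rfl | rfl | rfl | rfl | rfl | rfl⟩ |
    ⟨u, v', hadj, rfl⟩ | ⟨v', hA, rfl⟩ | ⟨v', hB, rfl⟩ <;>
    simp_all [Fin.val_inj] <;> omega

lemma U8 (hbij : GoodBijections G π τ) {b : RV × RV} {v : Fin g} {j : ℕ}
    (hb : b ∈ stArcs G π τ Vsol A B) (h1j : 1 ≤ j) (h3j : j ≤ 3)
    (h : b.2 = RV.w v j) :
    ∃ u : Fin g, G.Adj u v ∧ π v u = j ∧ b = (RV.r u (τ u v), RV.w v j) := by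
  rcases hb with rfl | ⟨i', hig, rfl⟩ | ⟨i', hig, rfl⟩ | rfl | ⟨v', rfl⟩ |
    ⟨v', i', h1, h6, rfl, hc⟩ | ⟨v', i', h1, h6, rfl, hcA, hcB⟩ | ⟨v', rfl | rfl⟩ |
    ⟨v', i', h1, h4, rfl, hc⟩ |
    ⟨v', rfl | ⟨rfl, hA⟩ | rfl | rfl | rfl | rfl | rfl | rfl | rfl | rfl⟩ |
    ⟨u, v', hadj, rfl⟩ | ⟨v', hA, rfl⟩ | ⟨v', hB, rfl⟩ <;>
    simp_all [Fin.val_inj] <;> try omega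
  obtain ⟨rfl, hj⟩ := h
  exact hj

lemma in_w4 (hbij : GoodBijections G π τ) {b : RV × RV} {v : Fin g}
    (hb : b ∈ stArcs G π τ Vsol A B) (h : b.2 = RV.w v 4) :
    b = (RV.m v 1, RV.w v 4) ∧ v ∉ A := by
  rcases hb with rfl | ⟨i', hig, rfl⟩ | ⟨i', hig, rfl⟩ | rfl | ⟨v', rfl⟩ |
    ⟨v', i', h1, h6, rfl, hc⟩ | ⟨v', i', h1, h6, rfl, hcA, hcB⟩ | ⟨v', rfl | rfl⟩ |
    ⟨v', i', h1, h4, rfl, hc⟩ |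
    ⟨v', rfl | ⟨rfl, hA⟩ | rfl | rfl | rfl | rfl | rfl | rfl | rfl | rfl⟩ |
    ⟨u, v', hadj, rfl⟩ | ⟨v', hA, rfl⟩ | ⟨v', hB, rfl⟩ <;>
    simp_all [Fin.val_inj] <;> try omega
  obtain ⟨rfl, h4⟩ := h
  have hm := (hbij _).1.1 (by exact hadj.symm)
  rw [h4] at hm
  simp at hm

lemma out_r4 (hbij : GoodBijections G π τ) {b : RV × RV} {v : Fin g}
    (hb : b ∈ stArcs G π τ Vsol A B) (h : b.1 = RV.r v 4) :
    b = (RV.r v 4, RV.lf v 4) ∧ v ∉ B := by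
  rcases hb with rfl | ⟨i', hig, rfl⟩ | ⟨i', hig, rfl⟩ | rfl | ⟨v', rfl⟩ |
    ⟨v', i', h1, h6, rfl, hc⟩ | ⟨v', i', h1, h6, rfl, hcA, hcB⟩ | ⟨v', rfl | rfl⟩ |
    ⟨v', i', h1, h4, rfl, hc⟩ |
    ⟨v', rfl | ⟨rfl, hA⟩ | rfl | rfl | rfl | rfl | rfl | rfl | rfl | rfl⟩ |
    ⟨u, v', hadj, rfl⟩ | ⟨v', hA, rfl⟩ | ⟨v', hB, rfl⟩ <;>
    simp_all [Fin.val_inj] <;> try omega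
  obtain ⟨rfl, h4⟩ := h
  have hm := (hbij _).2.1 (by exact hadj)
  rw [h4] at hm
  simp at hm

lemma in_root {b : RV × RV} (hb : b ∈ stArcs G π τ Vsol A B)
    (h : b.2 = RV.root) : False := by
  rcases hb with rfl | ⟨i', hig, rfl⟩ | ⟨i', hig, rfl⟩ | rfl | ⟨v', rfl⟩ |
    ⟨v', i', h1, h6, rfl, hc⟩ | ⟨v', i', h1, h6, rfl, hcA, hcB⟩ | ⟨v', rfl | rfl⟩ |
    ⟨v', i', h1, h4, rfl, hc⟩ |
    ⟨v', rfl | ⟨rfl, hA⟩ | rfl | rfl | rfl | rfl | rfl | rfl | rfl | rfl⟩ |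
    ⟨u, v', hadj, rfl⟩ | ⟨v', hA, rfl⟩ | ⟨v', hB, rfl⟩ <;>
    simp_all [Fin.val_inj]
lemma mem1 : (RV.root, RV.s 0) ∈ stArcs G π τ Vsol A B := by exact Or.inl rfl
lemma mem2 {i : ℕ} (h : i+3 ≤ g) : (RV.s i, RV.s (i+1)) ∈ stArcs G π τ Vsol A B := by
  exact Or.inr (Or.inl ⟨i, h, rfl⟩)
lemma mem3 {i : ℕ} (h : i+2 ≤ g) : (RV.s i, RV.rho i) ∈ stArcs G π τ Vsol A B := by
  exact Or.inr (Or.inr (Or.inl ⟨i, h, rfl⟩))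
lemma mem4 : (RV.s (g-2), RV.rho (g-1)) ∈ stArcs G π τ Vsol A B := by
  exact Or.inr (Or.inr (Or.inr (Or.inl rfl)))
lemma mem5 (v : Fin g) : (RV.r v 0, RV.r v 1) ∈ stArcs G π τ Vsol A B := by
  exact Or.inr (Or.inr (Or.inr (Or.inr (Or.inl ⟨v, rfl⟩))))
lemma mem6 (v : Fin g) {i : ℕ} (h1 : 1 ≤ i) (h6 : i ≤ 6) (hc : ¬(i = 4 ∧ v ∈ Vsol)) :
    (RV.w v i, RV.r v i) ∈ stArcs G π τ Vsol A B := by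
  exact Or.inr (Or.inr (Or.inr (Or.inr (Or.inr (Or.inl ⟨v, i, h1, h6, rfl, hc⟩)))))
lemma mem7 (v : Fin g) {i : ℕ} (h1 : 1 ≤ i) (h6 : i ≤ 6) (hcA : ¬(i = 4 ∧ v ∈ A))
    (hcB : ¬(i = 3 ∧ v ∈ B)) :
    (RV.w v i, RV.r v (i+1)) ∈ stArcs G π τ Vsol A B := by
  exact Or.inr (Or.inr (Or.inr (Or.inr (Or.inr (Or.inr (Or.inl ⟨v, i, h1, h6, rfl, hcA, hcB⟩))))))
lemma mem8a (v : Fin g) : (RV.w v 7, RV.r v 7) ∈ stArcs G π τ Vsol A B := by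
  exact Or.inr (Or.inr (Or.inr (Or.inr (Or.inr (Or.inr (Or.inr (Or.inl ⟨v, Or.inl rfl⟩)))))))
lemma mem8b (v : Fin g) : (RV.w v 7, RV.lf v 5) ∈ stArcs G π τ Vsol A B := by
  exact Or.inr (Or.inr (Or.inr (Or.inr (Or.inr (Or.inr (Or.inr (Or.inl ⟨v, Or.inr rfl⟩)))))))
lemma mem9 (v : Fin g) {i : ℕ} (h1 : 1 ≤ i) (h4 : i ≤ 4) (hc : ¬(i = 4 ∧ v ∈ B)) :
    (RV.r v i, RV.lf v i) ∈ stArcs G π τ Vsol A B := by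
  exact Or.inr (Or.inr (Or.inr (Or.inr (Or.inr (Or.inr (Or.inr (Or.inr (Or.inl
    ⟨v, i, h1, h4, rfl, hc⟩))))))))
lemma mem10 (v : Fin g) {q : RV × RV}
    (h : q = (RV.m v 1, RV.r v 0) ∨ (q = (RV.m v 1, RV.w v 4) ∧ v ∉ A)
        ∨ q = (RV.m v 2, RV.m v 1) ∨ q = (RV.m v 2, RV.w v 5)
        ∨ q = (RV.m v 3, RV.m v 2) ∨ q = (RV.m v 3, RV.w v 6)
        ∨ q = (RV.m v 4, RV.m v 3) ∨ q = (RV.m v 4, RV.r v 0)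
        ∨ q = (RV.rho v, RV.m v 4) ∨ q = (RV.rho v, RV.w v 7)) :
    q ∈ stArcs G π τ Vsol A B := by
  exact Or.inr (Or.inr (Or.inr (Or.inr (Or.inr (Or.inr (Or.inr (Or.inr (Or.inr (Or.inl
    ⟨v, h⟩)))))))))
lemma mem11 {u v : Fin g} (hadj : G.Adj u v) :
    (RV.r u (τ u v), RV.w v (π v u)) ∈ stArcs G π τ Vsol A B := by
  exact Or.inr (Or.inr (Or.inr (Or.inr (Or.inr (Or.inr (Or.inr (Or.inr (Or.inr (Or.inr (Or.inl
    ⟨u, v, hadj, rfl⟩))))))))))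
lemma mem12 {v : Fin g} (hA : v ∈ A) : (RV.m v 1, RV.r v 5) ∈ stArcs G π τ Vsol A B := by
  exact Or.inr (Or.inr (Or.inr (Or.inr (Or.inr (Or.inr (Or.inr (Or.inr (Or.inr (Or.inr (Or.inr
    (Or.inl ⟨v, hA, rfl⟩)))))))))))
lemma mem13 {v : Fin g} (hB : v ∈ B) : (RV.w v 3, RV.lf v 4) ∈ stArcs G π τ Vsol A B := by
  exact Or.inr (Or.inr (Or.inr (Or.inr (Or.inr (Or.inr (Or.inr (Or.inr (Or.inr (Or.inr (Or.inr
    (Or.inr ⟨v, hB, rfl⟩)))))))))))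
lemma verts_w (v : Fin g) :
    stVerts G π τ A B \ {RV.w v 4} = stVerts G π τ (A ∪ {v}) B := by
  unfold stVerts
  rw [Set.image_union, Set.image_singleton]
  ext y
  simp only [Set.mem_diff, Set.mem_union, Set.mem_singleton_iff]
  tauto

lemma verts_r (v : Fin g) :
    stVerts G π τ A B \ {RV.r v 4} = stVerts G π τ A (B ∪ {v}) := by
  unfold stVerts
  rw [Set.image_union, Set.image_singleton]
  ext y
  simp only [Set.mem_diff, Set.mem_union, Set.mem_singleton_iff]
  tauto

lemma arcs_w {v : Fin g} (hvA : v ∉ A) :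
    stArcs G π τ Vsol A B \ {(RV.m v 1, RV.w v 4), (RV.w v 4, RV.r v 5)}
      ∪ {(RV.m v 1, RV.r v 5)} = stArcs G π τ Vsol (A ∪ {v}) B := by
  ext q
  simp only [Set.mem_union, Set.mem_diff, Set.mem_singleton_iff, Set.mem_insert_iff]
  constructor
  · rintro (⟨hq, hne⟩ | rfl)
    · push_neg at hne
      obtain ⟨hne1, hne2⟩ := hne
      rcases hq with rfl | ⟨i, hig, rfl⟩ | ⟨i, hig, rfl⟩ | rfl | ⟨v', rfl⟩ |
        ⟨v', i, h1, h6, rfl, hc⟩ | ⟨v', i, h1, h6, rfl, hcA, hcB⟩ | ⟨v', rfl | rfl⟩ |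
        ⟨v', i, h1, h4, rfl, hc⟩ |
        ⟨v', rfl | ⟨rfl, hA'⟩ | rfl | rfl | rfl | rfl | rfl | rfl | rfl | rfl⟩ |
        ⟨u, v', hadj, rfl⟩ | ⟨v', hA', rfl⟩ | ⟨v', hB', rfl⟩
      · exact mem1
      · exact mem2 hig
      · exact mem3 hig
      · exact mem4
      · exact mem5 _
      · exact mem6 _ h1 h6 hc
      · refine mem7 _ h1 h6 ?_ hcB
        rintro ⟨rfl, hv'⟩
        rw [Set.mem_union, Set.mem_singleton_iff] at hv'
        rcases hv' with h | rfl
        · exact hcA ⟨rfl, h⟩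
        · exact hne2 rfl
      · exact mem8a _
      · exact mem8b _
      · exact mem9 _ h1 h4 hc
      · exact mem10 _ (Or.inl rfl)
      · refine mem10 _ (Or.inr (Or.inl ⟨rfl, ?_⟩))
        rw [Set.mem_union, Set.mem_singleton_iff]
        rintro (h | rfl)
        · exact hA' h
        · exact hne1 rfl
      · exact mem10 _ (Or.inr (Or.inr (Or.inl rfl)))
      · exact mem10 _ (Or.inr (Or.inr (Or.inr (Or.inl rfl))))
      · exact mem10 _ (Or.inr (Or.inr (Or.inr (Or.inr (Or.inl rfl)))))
      · exact mem10 _ (Or.inr (Or.inr (Or.inr (Or.inr (Or.inr (Or.inl rfl))))))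
      · exact mem10 _ (Or.inr (Or.inr (Or.inr (Or.inr (Or.inr (Or.inr (Or.inl rfl)))))))
      · exact mem10 _ (Or.inr (Or.inr (Or.inr (Or.inr (Or.inr (Or.inr (Or.inr (Or.inl rfl))))))))
      · exact mem10 _ (Or.inr (Or.inr (Or.inr (Or.inr (Or.inr (Or.inr (Or.inr (Or.inr (Or.inl rfl)))))))))
      · exact mem10 _ (Or.inr (Or.inr (Or.inr (Or.inr (Or.inr (Or.inr (Or.inr (Or.inr (Or.inr rfl)))))))))
      · exact mem11 hadj
      · exact mem12 (Set.mem_union_left _ hA')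
      · exact mem13 hB'
    · exact mem12 (Set.mem_union_right _ rfl)
  · intro hq
    rcases hq with rfl | ⟨i, hig, rfl⟩ | ⟨i, hig, rfl⟩ | rfl | ⟨v', rfl⟩ |
      ⟨v', i, h1, h6, rfl, hc⟩ | ⟨v', i, h1, h6, rfl, hcA, hcB⟩ | ⟨v', rfl | rfl⟩ |
      ⟨v', i, h1, h4, rfl, hc⟩ |
      ⟨v', rfl | ⟨rfl, hA'⟩ | rfl | rfl | rfl | rfl | rfl | rfl | rfl | rfl⟩ |
      ⟨u, v', hadj, rfl⟩ | ⟨v', hA', rfl⟩ | ⟨v', hB', rfl⟩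
    · exact Or.inl ⟨mem1, by simp⟩
    · exact Or.inl ⟨mem2 hig, by simp⟩
    · exact Or.inl ⟨mem3 hig, by simp⟩
    · exact Or.inl ⟨mem4, by simp⟩
    · exact Or.inl ⟨mem5 _, by simp⟩
    · refine Or.inl ⟨mem6 _ h1 h6 hc, ?_⟩
      rintro (h | h) <;> rw [Prod.mk.injEq] at h <;> simp [Fin.val_inj] at h <;> omega
    · refine Or.inl ⟨mem7 _ h1 h6 (fun h => hcA ⟨h.1, Set.mem_union_left _ h.2⟩) hcB, ?_⟩
      rintro (h | h) <;> rw [Prod.mk.injEq] at h <;> simp [Fin.val_inj] at h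
      obtain ⟨rfl, rfl⟩ := h
      exact hcA ⟨rfl, Set.mem_union_right _ rfl⟩
    · exact Or.inl ⟨mem8a _, by simp⟩
    · exact Or.inl ⟨mem8b _, by simp⟩
    · exact Or.inl ⟨mem9 _ h1 h4 hc, by simp⟩
    · exact Or.inl ⟨mem10 _ (Or.inl rfl), by simp⟩
    · rw [Set.mem_union, Set.mem_singleton_iff] at hA'
      push_neg at hA'
      refine Or.inl ⟨mem10 _ (Or.inr (Or.inl ⟨rfl, hA'.1⟩)), ?_⟩
      rintro (h | h) <;> rw [Prod.mk.injEq] at h <;> simp [Fin.val_inj] at h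
      exact absurd h hA'.2
    · exact Or.inl ⟨mem10 _ (Or.inr (Or.inr (Or.inl rfl))), by simp⟩
    · exact Or.inl ⟨mem10 _ (Or.inr (Or.inr (Or.inr (Or.inl rfl)))), by simp⟩
    · exact Or.inl ⟨mem10 _ (Or.inr (Or.inr (Or.inr (Or.inr (Or.inl rfl))))), by simp⟩
    · exact Or.inl ⟨mem10 _ (Or.inr (Or.inr (Or.inr (Or.inr (Or.inr (Or.inl rfl)))))), by simp⟩
    · exact Or.inl ⟨mem10 _ (Or.inr (Or.inr (Or.inr (Or.inr (Or.inr (Or.inr (Or.inl rfl))))))), by simp⟩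
    · exact Or.inl ⟨mem10 _ (Or.inr (Or.inr (Or.inr (Or.inr (Or.inr (Or.inr (Or.inr (Or.inl rfl)))))))), by simp⟩
    · exact Or.inl ⟨mem10 _ (Or.inr (Or.inr (Or.inr (Or.inr (Or.inr (Or.inr (Or.inr (Or.inr (Or.inl rfl))))))))), by simp⟩
    · exact Or.inl ⟨mem10 _ (Or.inr (Or.inr (Or.inr (Or.inr (Or.inr (Or.inr (Or.inr (Or.inr (Or.inr rfl))))))))), by simp⟩
    · exact Or.inl ⟨mem11 hadj, by simp⟩
    · rw [Set.mem_union, Set.mem_singleton_iff] at hA'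
      rcases hA' with h | rfl
      · refine Or.inl ⟨mem12 h, by simp⟩
      · exact Or.inr rfl
    · exact Or.inl ⟨mem13 hB', by simp⟩
lemma arcs_r {v : Fin g} (hvB : v ∉ B) :
    stArcs G π τ Vsol A B \ {(RV.w v 3, RV.r v 4), (RV.r v 4, RV.lf v 4)}
      ∪ {(RV.w v 3, RV.lf v 4)} = stArcs G π τ Vsol A (B ∪ {v}) := by
  ext q
  simp only [Set.mem_union, Set.mem_diff, Set.mem_singleton_iff, Set.mem_insert_iff]
  constructor
  · rintro (⟨hq, hne⟩ | rfl)
    · push_neg at hne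
      obtain ⟨hne1, hne2⟩ := hne
      rcases hq with rfl | ⟨i, hig, rfl⟩ | ⟨i, hig, rfl⟩ | rfl | ⟨v', rfl⟩ |
        ⟨v', i, h1, h6, rfl, hc⟩ | ⟨v', i, h1, h6, rfl, hcA, hcB⟩ | ⟨v', rfl | rfl⟩ |
        ⟨v', i, h1, h4, rfl, hc⟩ |
        ⟨v', rfl | ⟨rfl, hA'⟩ | rfl | rfl | rfl | rfl | rfl | rfl | rfl | rfl⟩ |
        ⟨u, v', hadj, rfl⟩ | ⟨v', hA', rfl⟩ | ⟨v', hB', rfl⟩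
      · exact mem1
      · exact mem2 hig
      · exact mem3 hig
      · exact mem4
      · exact mem5 _
      · exact mem6 _ h1 h6 hc
      · refine mem7 _ h1 h6 hcA ?_
        rintro ⟨rfl, hv'⟩
        rw [Set.mem_union, Set.mem_singleton_iff] at hv'
        rcases hv' with h | rfl
        · exact hcB ⟨rfl, h⟩
        · exact hne1 (by norm_num)
      · exact mem8a _
      · exact mem8b _
      · refine mem9 _ h1 h4 ?_
        rintro ⟨rfl, hv'⟩
        rw [Set.mem_union, Set.mem_singleton_iff] at hv'
        rcases hv' with h | rfl
        · exact hc ⟨rfl, h⟩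
        · exact hne2 rfl
      · exact mem10 _ (Or.inl rfl)
      · exact mem10 _ (Or.inr (Or.inl ⟨rfl, hA'⟩))
      · exact mem10 _ (Or.inr (Or.inr (Or.inl rfl)))
      · exact mem10 _ (Or.inr (Or.inr (Or.inr (Or.inl rfl))))
      · exact mem10 _ (Or.inr (Or.inr (Or.inr (Or.inr (Or.inl rfl)))))
      · exact mem10 _ (Or.inr (Or.inr (Or.inr (Or.inr (Or.inr (Or.inl rfl))))))
      · exact mem10 _ (Or.inr (Or.inr (Or.inr (Or.inr (Or.inr (Or.inr (Or.inl rfl)))))))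
      · exact mem10 _ (Or.inr (Or.inr (Or.inr (Or.inr (Or.inr (Or.inr (Or.inr (Or.inl rfl))))))))
      · exact mem10 _ (Or.inr (Or.inr (Or.inr (Or.inr (Or.inr (Or.inr (Or.inr (Or.inr (Or.inl rfl)))))))))
      · exact mem10 _ (Or.inr (Or.inr (Or.inr (Or.inr (Or.inr (Or.inr (Or.inr (Or.inr (Or.inr rfl)))))))))
      · exact mem11 hadj
      · exact mem12 hA'
      · exact mem13 (Set.mem_union_left _ hB')
    · exact mem13 (Set.mem_union_right _ rfl)
  · intro hq
    rcases hq with rfl | ⟨i, hig, rfl⟩ | ⟨i, hig, rfl⟩ | rfl | ⟨v', rfl⟩ |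
      ⟨v', i, h1, h6, rfl, hc⟩ | ⟨v', i, h1, h6, rfl, hcA, hcB⟩ | ⟨v', rfl | rfl⟩ |
      ⟨v', i, h1, h4, rfl, hc⟩ |
      ⟨v', rfl | ⟨rfl, hA'⟩ | rfl | rfl | rfl | rfl | rfl | rfl | rfl | rfl⟩ |
      ⟨u, v', hadj, rfl⟩ | ⟨v', hA', rfl⟩ | ⟨v', hB', rfl⟩
    · exact Or.inl ⟨mem1, by simp⟩
    · exact Or.inl ⟨mem2 hig, by simp⟩
    · exact Or.inl ⟨mem3 hig, by simp⟩
    · exact Or.inl ⟨mem4, by simp⟩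
    · exact Or.inl ⟨mem5 _, by simp⟩
    · refine Or.inl ⟨mem6 _ h1 h6 hc, ?_⟩
      rintro (h | h) <;> rw [Prod.mk.injEq] at h <;> simp [Fin.val_inj] at h <;> omega
    · refine Or.inl ⟨mem7 _ h1 h6 hcA (fun h => hcB ⟨h.1, Set.mem_union_left _ h.2⟩), ?_⟩
      rintro (h | h) <;> rw [Prod.mk.injEq] at h <;> simp [Fin.val_inj] at h
      obtain ⟨rfl, rfl⟩ := h
      exact hcB ⟨rfl, Set.mem_union_right _ rfl⟩
    · exact Or.inl ⟨mem8a _, by simp⟩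
    · exact Or.inl ⟨mem8b _, by simp⟩
    · refine Or.inl ⟨mem9 _ h1 h4 (fun h => hc ⟨h.1, Set.mem_union_left _ h.2⟩), ?_⟩
      rintro (h | h) <;> rw [Prod.mk.injEq] at h <;> simp [Fin.val_inj] at h
      obtain ⟨rfl, rfl⟩ := h
      exact hc ⟨rfl, Set.mem_union_right _ rfl⟩
    · exact Or.inl ⟨mem10 _ (Or.inl rfl), by simp⟩
    · exact Or.inl ⟨mem10 _ (Or.inr (Or.inl ⟨rfl, hA'⟩)), by simp⟩
    · exact Or.inl ⟨mem10 _ (Or.inr (Or.inr (Or.inl rfl))), by simp⟩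
    · exact Or.inl ⟨mem10 _ (Or.inr (Or.inr (Or.inr (Or.inl rfl)))), by simp⟩
    · exact Or.inl ⟨mem10 _ (Or.inr (Or.inr (Or.inr (Or.inr (Or.inl rfl))))), by simp⟩
    · exact Or.inl ⟨mem10 _ (Or.inr (Or.inr (Or.inr (Or.inr (Or.inr (Or.inl rfl)))))), by simp⟩
    · exact Or.inl ⟨mem10 _ (Or.inr (Or.inr (Or.inr (Or.inr (Or.inr (Or.inr (Or.inl rfl))))))), by simp⟩
    · exact Or.inl ⟨mem10 _ (Or.inr (Or.inr (Or.inr (Or.inr (Or.inr (Or.inr (Or.inr (Or.inl rfl)))))))), by simp⟩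
    · exact Or.inl ⟨mem10 _ (Or.inr (Or.inr (Or.inr (Or.inr (Or.inr (Or.inr (Or.inr (Or.inr (Or.inl rfl))))))))), by simp⟩
    · exact Or.inl ⟨mem10 _ (Or.inr (Or.inr (Or.inr (Or.inr (Or.inr (Or.inr (Or.inr (Or.inr (Or.inr rfl))))))))), by simp⟩
    · exact Or.inl ⟨mem11 hadj, by simp⟩
    · exact Or.inl ⟨mem12 hA', by simp⟩
    · rw [Set.mem_union, Set.mem_singleton_iff] at hB'
      rcases hB' with h | rfl
      · exact Or.inl ⟨mem13 h, by simp⟩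
      · exact Or.inr rfl
lemma reach_step (hbij : GoodBijections G π τ) (hg : 4 ≤ g)
    (hA : A ⊆ Vsol) (hB : B ⊆ Vsol) {N N' : Net RV}
    (hverts : N.verts = stVerts G π τ A B) (hroot : N.root = RV.root)
    (harcs : N.arcs = stArcs G π τ Vsol A B) (h : SuppStep N N') :
    ∃ A' B' : Set (Fin g), A' ⊆ Vsol ∧ B' ⊆ Vsol ∧
      N'.verts = stVerts G π τ A' B' ∧ N'.root = RV.root ∧
      N'.arcs = stArcs G π τ Vsol A' B' := by
  obtain ⟨x, p, c, hxv, hin, hout, hpx, hxc, hroot', hverts', harcs'⟩ := h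
  rw [harcs] at hpx hxc
  have hout' : {a ∈ stArcs G π τ Vsol A B | a.1 = x}.ncard = 1 := by
    rw [← harcs]; exact hout
  have hin' : {a ∈ stArcs G π τ Vsol A B | a.2 = x}.ncard = 1 := by
    rw [← harcs]; exact hin
  obtain ⟨eo, heo⟩ := Set.ncard_eq_one.mp hout'
  obtain ⟨ei, hei⟩ := Set.ncard_eq_one.mp hin'
  have hOUT : ∀ q ∈ stArcs G π τ Vsol A B, q.1 = x → q = (x, c) := by
    intro q hq h1
    have hq' : q ∈ {a ∈ stArcs G π τ Vsol A B | a.1 = x} := ⟨hq, h1⟩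
    have hc' : (x, c) ∈ {a ∈ stArcs G π τ Vsol A B | a.1 = x} := ⟨hxc, rfl⟩
    rw [heo, Set.mem_singleton_iff] at hq' hc'
    rw [hq', hc']
  have hIN : ∀ q ∈ stArcs G π τ Vsol A B, q.2 = x → q = (p, x) := by
    intro q hq h1
    have hq' : q ∈ {a ∈ stArcs G π τ Vsol A B | a.2 = x} := ⟨hq, h1⟩
    have hc' : (p, x) ∈ {a ∈ stArcs G π τ Vsol A B | a.2 = x} := ⟨hpx, rfl⟩
    rw [hei, Set.mem_singleton_iff] at hq' hc'
    rw [hq', hc']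
  rcases hxc with heq | ⟨i, hig, heq⟩ | ⟨i, hig, heq⟩ | heq | ⟨v, heq⟩ |
    ⟨v, i, h1, h6, heq, hc⟩ | ⟨v, i, h1, h6, heq, hcA, hcB⟩ | ⟨v, heq | heq⟩ |
    ⟨v, i, h1, h4, heq, hc⟩ |
    ⟨v, heq | ⟨heq, hA'⟩ | heq | heq | heq | heq | heq | heq | heq | heq⟩ |
    ⟨u, v, hadj, heq⟩ | ⟨v, hA', heq⟩ | ⟨v, hB', heq⟩ <;>
    rw [Prod.mk.injEq] at heq <;> obtain ⟨rfl, rfl⟩ := heq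
  · -- (root, s 0)
    exact (in_root hpx rfl).elim
  · -- (s i, s (i+1))
    have e := hOUT _ (mem3 (show i+2 ≤ g by omega)) rfl
    simp at e
  · -- (s i, rho i)
    by_cases hi3 : i + 3 ≤ g
    · have e := hOUT _ (mem2 hi3) rfl
      simp at e
    · have hi : i = g - 2 := by omega
      subst hi
      have e := hOUT _ mem4 rfl
      simp at e <;> omega
  · -- (s (g-2), rho (g-1))
    have e := hOUT _ (mem3 (show (g-2)+2 ≤ g by omega)) rfl
    simp at e <;> omega
  · -- (r v 0, r v 1)
    have e1 := hIN _ (mem10 v (Or.inl rfl)) rfl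
    have e2 := hIN _ (mem10 v (Or.inr (Or.inr (Or.inr (Or.inr (Or.inr (Or.inr (Or.inr
      (Or.inl rfl))))))))) rfl
    rw [← e2] at e1
    simp at e1
  · -- (w v i, r v i)
    by_cases hiB : i = 3 ∧ v ∈ B
    · obtain ⟨rfl, hvB⟩ := hiB
      have e := hOUT _ (mem13 hvB) rfl
      simp at e
    · have e := hOUT _ (mem7 v h1 h6 (fun hh => hc ⟨hh.1, hA hh.2⟩) hiB) rfl
      simp at e <;> omega
  · -- (w v i, r v (i+1))
    by_cases hi4 : i = 4
    · subst hi4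
      have hvA : v ∉ A := fun hh => hcA ⟨rfl, hh⟩
      by_cases hvV : v ∈ Vsol
      · -- conclude : suppression of w v 4
        have hp := in_w4 hbij hpx rfl
        obtain ⟨hpeq, -⟩ := hp
        rw [Prod.mk.injEq] at hpeq
        obtain ⟨rfl, -⟩ := hpeq
        refine ⟨A ∪ {v}, B, Set.union_subset hA (by simpa using hvV), hB, ?_, ?_, ?_⟩
        · rw [hverts', hverts, verts_w]
        · rw [hroot', hroot]
        · rw [harcs] at harcs'
          rw [show (4:ℕ)+1 = 5 from rfl] at harcs'
          rw [harcs', arcs_w hvA]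
      · have e := hOUT _ (mem6 v (by omega) (by omega) (fun hh => hvV hh.2)) rfl
        simp at e
    · have e := hOUT _ (mem6 v h1 h6 (fun hh => hi4 hh.1)) rfl
      simp at e <;> omega
  · -- (w v 7, r v 7)
    have e := hOUT _ (mem8b v) rfl
    simp at e
  · -- (w v 7, lf v 5)
    have e := hOUT _ (mem8a v) rfl
    simp at e
  · -- (r v i, lf v i)
    by_cases hi4 : i = 4
    · subst hi4
      have hvB : v ∉ B := fun hh => hc ⟨rfl, hh⟩
      by_cases hvV : v ∈ Vsol
      · -- conclude : suppression of r v 4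
        have hp := U5 hpx (by omega) (by omega) rfl
        rcases hp with ⟨hpeq, -, -⟩ | ⟨hpeq, hcc⟩ | ⟨hfive, -⟩
        · rw [show (4:ℕ)-1 = 3 from rfl] at hpeq
          rw [Prod.mk.injEq] at hpeq
          obtain ⟨rfl, -⟩ := hpeq
          refine ⟨A, B ∪ {v}, hA, Set.union_subset hB (by simpa using hvV), ?_, ?_, ?_⟩
          · rw [hverts', hverts, verts_r]
          · rw [hroot', hroot]
          · rw [harcs] at harcs'
            rw [harcs', arcs_r hvB]
        · exact absurd ⟨rfl, hvV⟩ hcc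
        · omega
      · have e1 := hIN _ (mem7 v (i := 3) (by omega) (by omega) (by simp)
          (fun hh => hvB hh.2)) rfl
        have e2 := hIN _ (mem6 v (i := 4) (by omega) (by omega) (fun hh => hvV hh.2)) rfl
        rw [← e2] at e1
        simp at e1
    · rcases Nat.lt_or_ge i 2 with h2 | h2
      · have hi1 : i = 1 := by omega
        subst hi1
        have e1 := hIN _ (mem5 v) rfl
        have e2 := hIN _ (mem6 v (by omega) (by omega) (by simp)) rfl
        rw [← e2] at e1
        simp at e1
      · have e1 := hIN _ (mem7 v (i := i-1) (by omega) (by omega)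
          (fun hh => absurd hh.1 (by omega)) (fun hh => hi4 (by omega)))
          (by simp; omega)
        have e2 := hIN _ (mem6 v (by omega) (by omega) (fun hh => hi4 hh.1)) rfl
        rw [← e2] at e1
        simp at e1 <;> omega
  · -- (m v 1, r v 0)
    by_cases hvA' : v ∈ A
    · have e := hOUT _ (mem12 hvA') rfl
      simp at e
    · have e := hOUT _ (mem10 v (Or.inr (Or.inl ⟨rfl, hvA'⟩))) rfl
      simp at e
  · -- (m v 1, w v 4)
    have e := hOUT _ (mem10 v (Or.inl rfl)) rfl
    simp at e
  · -- (m v 2, m v 1)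
    have e := hOUT _ (mem10 v (Or.inr (Or.inr (Or.inr (Or.inl rfl))))) rfl
    simp at e
  · -- (m v 2, w v 5)
    have e := hOUT _ (mem10 v (Or.inr (Or.inr (Or.inl rfl)))) rfl
    simp at e
  · -- (m v 3, m v 2)
    have e := hOUT _ (mem10 v (Or.inr (Or.inr (Or.inr (Or.inr (Or.inr (Or.inl rfl))))))) rfl
    simp at e
  · -- (m v 3, w v 6)
    have e := hOUT _ (mem10 v (Or.inr (Or.inr (Or.inr (Or.inr (Or.inl rfl)))))) rfl
    simp at e
  · -- (m v 4, m v 3)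
    have e := hOUT _ (mem10 v (Or.inr (Or.inr (Or.inr (Or.inr (Or.inr (Or.inr (Or.inr
      (Or.inl rfl))))))))) rfl
    simp at e
  · -- (m v 4, r v 0)
    have e := hOUT _ (mem10 v (Or.inr (Or.inr (Or.inr (Or.inr (Or.inr (Or.inr (Or.inl rfl)))))))) rfl
    simp at e
  · -- (rho v, m v 4)
    have e := hOUT _ (mem10 v (Or.inr (Or.inr (Or.inr (Or.inr (Or.inr (Or.inr (Or.inr (Or.inr
      (Or.inr rfl)))))))))) rfl
    simp at e
  · -- (rho v, w v 7)
    have e := hOUT _ (mem10 v (Or.inr (Or.inr (Or.inr (Or.inr (Or.inr (Or.inr (Or.inr (Or.inr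
      (Or.inl rfl)))))))))) rfl
    simp at e
  · -- interarc (r u (τ u v), w v (π v u))
    have hj := (hbij u).2.1 (by exact hadj)
    simp only [Set.mem_insert_iff, Set.mem_singleton_iff] at hj
    rcases hj with h5 | h6' | h7
    · by_cases huA : u ∈ A
      · have e1 := hIN _ (mem12 huA) (by rw [h5])
        have e2 := hIN _ (mem6 u (i := 5) (by omega) (by omega) (by simp)) (by rw [h5])
        rw [← e2] at e1
        simp at e1
      · have e1 := hIN _ (mem7 u (i := 4) (by omega) (by omega) (fun hh => huA hh.2)
          (by simp)) (by rw [h5])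
        have e2 := hIN _ (mem6 u (i := 5) (by omega) (by omega) (by simp)) (by rw [h5])
        rw [← e2] at e1
        simp at e1
    · have e1 := hIN _ (mem7 u (i := 5) (by omega) (by omega) (by simp) (by simp))
        (by rw [h6'])
      have e2 := hIN _ (mem6 u (i := 6) (by omega) (by omega) (by simp)) (by rw [h6'])
      rw [← e2] at e1
      simp at e1
    · have e1 := hIN _ (mem7 u (i := 6) (by omega) (by omega) (by simp) (by simp))
        (by rw [h7])
      have e2 := hIN _ (mem8a u) (by rw [h7])
      rw [← e2] at e1
      simp at e1
  · -- (m v 1, r v 5)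
    have e := hOUT _ (mem10 v (Or.inl rfl)) rfl
    simp at e
  · -- (w v 3, lf v 4)
    have e := hOUT _ (mem6 v (i := 3) (by omega) (by omega) (by simp)) rfl
    simp at e
lemma init_verts : (NG G π τ).verts = stVerts G π τ (∅ : Set (Fin g)) ∅ := by
  simp [stVerts]

lemma init_arcs :
    NGarcs G π τ \ {a | ∃ v ∈ Vsol, a = (RV.w (v:ℕ) 4, RV.r (v:ℕ) 4)} =
      stArcs G π τ Vsol ∅ ∅ := by
  ext q
  constructor
  · rintro ⟨hq, hnd⟩
    have hnd' : ∀ v : Fin g, v ∈ Vsol → q ≠ (RV.w (v:ℕ) 4, RV.r (v:ℕ) 4) :=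
      fun v hv hqe => hnd ⟨v, hv, hqe⟩
    rcases hq with (hcn | hg') | hi
    · rcases hcn with ((rfl | ⟨i, hig, rfl⟩) | ⟨i, hig, rfl⟩) | rfl
      · exact mem1
      · exact mem2 hig
      · exact mem3 hig
      · exact mem4
    · rw [Set.mem_iUnion] at hg'
      obtain ⟨v, hgv⟩ := hg'
      rcases hgv with ((((rfl | ⟨i, h1, h6, rfl | rfl⟩) | (rfl | rfl)) | ⟨i, h1, h4, rfl⟩) |
        (rfl | rfl | rfl | rfl | rfl | rfl | rfl | rfl | rfl | rfl))
      · exact mem5 v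
      · refine mem6 v h1 h6 ?_
        rintro ⟨rfl, hvV⟩
        exact hnd' v hvV rfl
      · exact mem7 v h1 h6 (by simp) (by simp)
      · exact mem8a v
      · exact mem8b v
      · exact mem9 v h1 h4 (by simp)
      · exact mem10 v (Or.inl rfl)
      · exact mem10 v (Or.inr (Or.inl ⟨rfl, by simp⟩))
      · exact mem10 v (Or.inr (Or.inr (Or.inl rfl)))
      · exact mem10 v (Or.inr (Or.inr (Or.inr (Or.inl rfl))))
      · exact mem10 v (Or.inr (Or.inr (Or.inr (Or.inr (Or.inl rfl)))))
      · exact mem10 v (Or.inr (Or.inr (Or.inr (Or.inr (Or.inr (Or.inl rfl))))))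
      · exact mem10 v (Or.inr (Or.inr (Or.inr (Or.inr (Or.inr (Or.inr (Or.inl rfl)))))))
      · exact mem10 v (Or.inr (Or.inr (Or.inr (Or.inr (Or.inr (Or.inr (Or.inr (Or.inl rfl))))))))
      · exact mem10 v (Or.inr (Or.inr (Or.inr (Or.inr (Or.inr (Or.inr (Or.inr (Or.inr (Or.inl rfl)))))))))
      · exact mem10 v (Or.inr (Or.inr (Or.inr (Or.inr (Or.inr (Or.inr (Or.inr (Or.inr (Or.inr rfl)))))))))
    · obtain ⟨u, v, hadj, rfl⟩ := hi
      exact mem11 hadj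
  · intro hq
    rcases hq with rfl | ⟨i, hig, rfl⟩ | ⟨i, hig, rfl⟩ | rfl | ⟨v, rfl⟩ |
      ⟨v, i, h1, h6, rfl, hc⟩ | ⟨v, i, h1, h6, rfl, hcA, hcB⟩ | ⟨v, rfl | rfl⟩ |
      ⟨v, i, h1, h4, rfl, hc⟩ |
      ⟨v, rfl | ⟨rfl, hA'⟩ | rfl | rfl | rfl | rfl | rfl | rfl | rfl | rfl⟩ |
      ⟨u, v, hadj, rfl⟩ | ⟨v, hA', rfl⟩ | ⟨v, hB', rfl⟩
    · exact ⟨Or.inl (Or.inl (Or.inl (Or.inl (Or.inl rfl)))),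
        by rintro ⟨v', hv', hqe⟩; simp at hqe⟩
    · exact ⟨Or.inl (Or.inl (Or.inl (Or.inl (Or.inr ⟨i, hig, rfl⟩)))),
        by rintro ⟨v', hv', hqe⟩; simp at hqe⟩
    · exact ⟨Or.inl (Or.inl (Or.inl (Or.inr ⟨i, hig, rfl⟩))),
        by rintro ⟨v', hv', hqe⟩; simp at hqe⟩
    · exact ⟨Or.inl (Or.inl (Or.inr rfl)),
        by rintro ⟨v', hv', hqe⟩; simp at hqe⟩
    · exact ⟨Or.inl (Or.inr (Set.mem_iUnion.mpr ⟨v, Or.inl (Or.inl (Or.inl (Or.inl rfl)))⟩)),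
        by rintro ⟨v', hv', hqe⟩; simp at hqe⟩
    · refine ⟨Or.inl (Or.inr (Set.mem_iUnion.mpr ⟨v,
        Or.inl (Or.inl (Or.inl (Or.inr ⟨i, h1, h6, Or.inl rfl⟩)))⟩)), ?_⟩
      rintro ⟨v', hv', hqe⟩
      simp [Fin.val_inj] at hqe
      exact hc ⟨hqe.2, hqe.1 ▸ hv'⟩
    · refine ⟨Or.inl (Or.inr (Set.mem_iUnion.mpr ⟨v,
        Or.inl (Or.inl (Or.inl (Or.inr ⟨i, h1, h6, Or.inr rfl⟩)))⟩)), ?_⟩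
      rintro ⟨v', hv', hqe⟩
      simp [Fin.val_inj] at hqe
      omega
    · exact ⟨Or.inl (Or.inr (Set.mem_iUnion.mpr ⟨v, Or.inl (Or.inl (Or.inr (Or.inl rfl)))⟩)),
        by rintro ⟨v', hv', hqe⟩; simp at hqe⟩
    · exact ⟨Or.inl (Or.inr (Set.mem_iUnion.mpr ⟨v, Or.inl (Or.inl (Or.inr (Or.inr rfl)))⟩)),
        by rintro ⟨v', hv', hqe⟩; simp at hqe⟩
    · exact ⟨Or.inl (Or.inr (Set.mem_iUnion.mpr ⟨v, Or.inl (Or.inr ⟨i, h1, h4, rfl⟩)⟩)),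
        by rintro ⟨v', hv', hqe⟩; simp at hqe⟩
    · exact ⟨Or.inl (Or.inr (Set.mem_iUnion.mpr ⟨v, Or.inr (Or.inl rfl)⟩)),
        by rintro ⟨v', hv', hqe⟩; simp at hqe⟩
    · exact ⟨Or.inl (Or.inr (Set.mem_iUnion.mpr ⟨v, Or.inr (Or.inr (Or.inl rfl))⟩)),
        by rintro ⟨v', hv', hqe⟩; simp at hqe⟩
    · exact ⟨Or.inl (Or.inr (Set.mem_iUnion.mpr ⟨v, Or.inr (Or.inr (Or.inr (Or.inl rfl)))⟩)),
        by rintro ⟨v', hv', hqe⟩; simp at hqe⟩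
    · exact ⟨Or.inl (Or.inr (Set.mem_iUnion.mpr ⟨v, Or.inr (Or.inr (Or.inr (Or.inr (Or.inl rfl))))⟩)),
        by rintro ⟨v', hv', hqe⟩; simp at hqe⟩
    · exact ⟨Or.inl (Or.inr (Set.mem_iUnion.mpr ⟨v, Or.inr (Or.inr (Or.inr (Or.inr (Or.inr (Or.inl rfl)))))⟩)),
        by rintro ⟨v', hv', hqe⟩; simp at hqe⟩
    · exact ⟨Or.inl (Or.inr (Set.mem_iUnion.mpr ⟨v, Or.inr (Or.inr (Or.inr (Or.inr (Or.inr (Or.inr (Or.inl rfl))))))⟩)),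
        by rintro ⟨v', hv', hqe⟩; simp at hqe⟩
    · exact ⟨Or.inl (Or.inr (Set.mem_iUnion.mpr ⟨v, Or.inr (Or.inr (Or.inr (Or.inr (Or.inr (Or.inr (Or.inr (Or.inl rfl)))))))⟩)),
        by rintro ⟨v', hv', hqe⟩; simp at hqe⟩
    · exact ⟨Or.inl (Or.inr (Set.mem_iUnion.mpr ⟨v, Or.inr (Or.inr (Or.inr (Or.inr (Or.inr (Or.inr (Or.inr (Or.inr (Or.inl rfl))))))))⟩)),
        by rintro ⟨v', hv', hqe⟩; simp at hqe⟩
    · exact ⟨Or.inl (Or.inr (Set.mem_iUnion.mpr ⟨v, Or.inr (Or.inr (Or.inr (Or.inr (Or.inr (Or.inr (Or.inr (Or.inr (Or.inr (Or.inl rfl)))))))))⟩)),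
        by rintro ⟨v', hv', hqe⟩; simp at hqe⟩
    · exact ⟨Or.inl (Or.inr (Set.mem_iUnion.mpr ⟨v, Or.inr (Or.inr (Or.inr (Or.inr (Or.inr (Or.inr (Or.inr (Or.inr (Or.inr (Or.inr rfl)))))))))⟩)),
        by rintro ⟨v', hv', hqe⟩; simp at hqe⟩
    · exact ⟨Or.inr ⟨u, v, hadj, rfl⟩,
        by rintro ⟨v', hv', hqe⟩; simp at hqe⟩
    · exact absurd hA' (Set.notMem_empty _)
    · exact absurd hB' (Set.notMem_empty _)
lemma w4_in_NGverts (v : Fin g) : RV.w (v:ℕ) 4 ∈ (NG G π τ).verts :=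
  Or.inr ⟨(RV.m (v:ℕ) 1, RV.w (v:ℕ) 4),
    Or.inl (Or.inr (Set.mem_iUnion.mpr ⟨v, Or.inr (Or.inr (Or.inl rfl))⟩)), Or.inr rfl⟩

lemma r4_in_NGverts (v : Fin g) : RV.r (v:ℕ) 4 ∈ (NG G π τ).verts :=
  Or.inr ⟨(RV.r (v:ℕ) 4, RV.lf (v:ℕ) 4),
    Or.inl (Or.inr (Set.mem_iUnion.mpr ⟨v, Or.inl (Or.inr ⟨4, by omega, by omega, rfl⟩)⟩)),
    Or.inl rfl⟩

lemma final_AB (hbij : GoodBijections G π τ)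
    (hA : A ⊆ Vsol) (hB : B ⊆ Vsol) {N : Net RV}
    (hverts : N.verts = stVerts G π τ A B)
    (harcs : N.arcs = stArcs G π τ Vsol A B)
    (hterm : ∀ y ∈ N.verts, ¬(N.indeg y = 1 ∧ N.outdeg y = 1)) :
    A = Vsol ∧ B = Vsol := by
  constructor
  · refine Set.Subset.antisymm hA fun v hv => ?_
    by_contra hvA
    refine hterm (RV.w (v:ℕ) 4) ?_ ⟨?_, ?_⟩
    · rw [hverts]
      refine ⟨w4_in_NGverts v, ?_⟩
      rintro (⟨v', hv', hqe⟩ | ⟨v', hv', hqe⟩) <;> simp [Fin.val_inj] at hqe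
      · exact hvA (hqe ▸ hv')
    · show ({a ∈ N.arcs | a.2 = RV.w (v:ℕ) 4}).ncard = 1
      rw [harcs]
      have : {a ∈ stArcs G π τ Vsol A B | a.2 = RV.w (v:ℕ) 4} =
          {(RV.m (v:ℕ) 1, RV.w (v:ℕ) 4)} := by
        ext q
        constructor
        · rintro ⟨hq, hq2⟩
          exact (in_w4 hbij hq hq2).1
        · rintro rfl
          exact ⟨mem10 v (Or.inr (Or.inl ⟨rfl, hvA⟩)), rfl⟩
      rw [this, Set.ncard_singleton]
    · show ({a ∈ N.arcs | a.1 = RV.w (v:ℕ) 4}).ncard = 1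
      rw [harcs]
      have : {a ∈ stArcs G π τ Vsol A B | a.1 = RV.w (v:ℕ) 4} =
          {(RV.w (v:ℕ) 4, RV.r (v:ℕ) 5)} := by
        ext q
        constructor
        · rintro ⟨hq, hq2⟩
          rcases U3 hq (by omega) (by omega) hq2 with ⟨rfl, hcc⟩ | ⟨rfl, -, -⟩ | ⟨h3, -⟩
          · exact absurd ⟨rfl, hv⟩ hcc
          · rfl
          · omega
        · rintro rfl
          exact ⟨mem7 v (i := 4) (by omega) (by omega) (fun hh => hvA hh.2)
            (fun hh => by omega), rfl⟩
      rw [this, Set.ncard_singleton]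
  · refine Set.Subset.antisymm hB fun v hv => ?_
    by_contra hvB
    refine hterm (RV.r (v:ℕ) 4) ?_ ⟨?_, ?_⟩
    · rw [hverts]
      refine ⟨r4_in_NGverts v, ?_⟩
      rintro (⟨v', hv', hqe⟩ | ⟨v', hv', hqe⟩) <;> simp [Fin.val_inj] at hqe
      · exact hvB (hqe ▸ hv')
    · show ({a ∈ N.arcs | a.2 = RV.r (v:ℕ) 4}).ncard = 1
      rw [harcs]
      have : {a ∈ stArcs G π τ Vsol A B | a.2 = RV.r (v:ℕ) 4} =
          {(RV.w (v:ℕ) 3, RV.r (v:ℕ) 4)} := by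
        ext q
        constructor
        · rintro ⟨hq, hq2⟩
          rcases U5 hq (by omega) (by omega) hq2 with ⟨rfl, -, -⟩ | ⟨rfl, hcc⟩ | ⟨h5, -⟩
          · rfl
          · exact absurd ⟨rfl, hv⟩ hcc
          · omega
        · rintro rfl
          exact ⟨mem7 v (i := 3) (by omega) (by omega) (fun hh => by omega)
            (fun hh => hvB hh.2), rfl⟩
      rw [this, Set.ncard_singleton]
    · show ({a ∈ N.arcs | a.1 = RV.r (v:ℕ) 4}).ncard = 1
      rw [harcs]
      have : {a ∈ stArcs G π τ Vsol A B | a.1 = RV.r (v:ℕ) 4} =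
          {(RV.r (v:ℕ) 4, RV.lf (v:ℕ) 4)} := by
        ext q
        constructor
        · rintro ⟨hq, hq2⟩
          exact (out_r4 hbij hq hq2).1
        · rintro rfl
          exact ⟨mem9 v (by omega) (by omega) (fun hh => hvB hh.2), rfl⟩
      rw [this, Set.ncard_singleton]
lemma classify (hbij : GoodBijections G π τ) (hg : 4 ≤ g) {a b : RV × RV}
    (ha : a ∈ stArcs G π τ Vsol Vsol Vsol) (haroot : a.1 ≠ RV.root)
    (hOUT : ∀ q ∈ stArcs G π τ Vsol Vsol Vsol, q.1 = a.1 → q = a)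
    (hb : b ∈ stArcs G π τ Vsol Vsol Vsol) (hb2 : b.2 = a.2) (hne : b ≠ a) :
    ∃ v : Fin g, a = (RV.r (v:ℕ) 0, RV.r (v:ℕ) 1) := by
  rcases ha with rfl | ⟨i, hig, rfl⟩ | ⟨i, hig, rfl⟩ | rfl | ⟨v, rfl⟩ |
    ⟨v, i, h1, h6, rfl, hc⟩ | ⟨v, i, h1, h6, rfl, hcA, hcB⟩ | ⟨v, rfl | rfl⟩ |
    ⟨v, i, h1, h4, rfl, hc⟩ |
    ⟨v, rfl | ⟨rfl, hA'⟩ | rfl | rfl | rfl | rfl | rfl | rfl | rfl | rfl⟩ |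
    ⟨u, v, hadj, rfl⟩ | ⟨v, hA', rfl⟩ | ⟨v, hB', rfl⟩
  · exact absurd rfl haroot
  · have e := hOUT _ (mem3 (show i+2 ≤ g by omega)) rfl
    simp at e
  · by_cases hi3 : i + 3 ≤ g
    · have e := hOUT _ (mem2 hi3) rfl
      simp at e
    · have hieq : i = g - 2 := by omega
      subst hieq
      have e := hOUT _ mem4 rfl
      simp at e <;> omega
  · have e := hOUT _ (mem3 (show (g-2)+2 ≤ g by omega)) rfl
    simp at e <;> omega
  · exact ⟨v, rfl⟩
  · by_cases hiB : i = 3 ∧ v ∈ Vsol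
    · obtain ⟨rfl, hvB⟩ := hiB
      have e := hOUT _ (mem13 hvB) rfl
      simp at e
    · have e := hOUT _ (mem7 v h1 h6 hc hiB) rfl
      simp at e <;> omega
  · have e := hOUT _ (mem6 v h1 h6 hcA) rfl
    simp at e <;> omega
  · have e := hOUT _ (mem8b v) rfl
    simp at e
  · have e := hOUT _ (mem8a v) rfl
    simp at e
  · rcases U6 hb h1 h4 hb2 with ⟨hbe, -⟩ | ⟨rfl, hvB, hbe⟩
    · exact absurd hbe hne
    · exact absurd ⟨rfl, hvB⟩ hc
  · by_cases hvA : v ∈ Vsol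
    · have e := hOUT _ (mem12 hvA) rfl
      simp at e
    · have e := hOUT _ (mem10 v (Or.inr (Or.inl ⟨rfl, hvA⟩))) rfl
      simp at e
  · have e := hOUT _ (mem10 v (Or.inl rfl)) rfl
    simp at e
  · have e := hOUT _ (mem10 v (Or.inr (Or.inr (Or.inr (Or.inl rfl))))) rfl
    simp at e
  · have e := hOUT _ (mem10 v (Or.inr (Or.inr (Or.inl rfl)))) rfl
    simp at e
  · have e := hOUT _ (mem10 v (Or.inr (Or.inr (Or.inr (Or.inr (Or.inr (Or.inl rfl))))))) rfl
    simp at e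
  · have e := hOUT _ (mem10 v (Or.inr (Or.inr (Or.inr (Or.inr (Or.inl rfl)))))) rfl
    simp at e
  · have e := hOUT _ (mem10 v (Or.inr (Or.inr (Or.inr (Or.inr (Or.inr (Or.inr (Or.inr
      (Or.inl rfl))))))))) rfl
    simp at e
  · have e := hOUT _ (mem10 v (Or.inr (Or.inr (Or.inr (Or.inr (Or.inr (Or.inr (Or.inl rfl)))))))) rfl
    simp at e
  · have e := hOUT _ (mem10 v (Or.inr (Or.inr (Or.inr (Or.inr (Or.inr (Or.inr (Or.inr (Or.inr
      (Or.inr rfl)))))))))) rfl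
    simp at e
  · have e := hOUT _ (mem10 v (Or.inr (Or.inr (Or.inr (Or.inr (Or.inr (Or.inr (Or.inr (Or.inr
      (Or.inl rfl)))))))))) rfl
    simp at e
  · -- interarc
    have hj := (hbij v).1.1 (by exact hadj.symm)
    simp only [Set.mem_insert_iff, Set.mem_singleton_iff] at hj
    obtain ⟨u', hadj', hpe, hbe⟩ := U8 hbij hb (by omega) (by omega) hb2
    have huu : u' = u := (hbij v).1.2.1 (by exact hadj'.symm) (by exact hadj.symm) hpe
    subst huu
    exact absurd hbe hne
  · have e := hOUT _ (mem10 v (Or.inl rfl)) rfl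
    simp at e
  · have e := hOUT _ (mem6 v (i := 3) (by omega) (by omega) (by simp)) rfl
    simp at e
def trace7 (v : ℕ) : List (RV × RV) :=
  [(RV.r v 0, RV.r v 1), (RV.w v 1, RV.r v 1), (RV.w v 1, RV.r v 2), (RV.w v 2, RV.r v 2),
   (RV.w v 2, RV.r v 3), (RV.w v 3, RV.r v 3), (RV.w v 3, RV.lf v 4)]

def trace15 (v : ℕ) : List (RV × RV) :=
  [(RV.r v 0, RV.r v 1), (RV.w v 1, RV.r v 1), (RV.w v 1, RV.r v 2), (RV.w v 2, RV.r v 2),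
   (RV.w v 2, RV.r v 3), (RV.w v 3, RV.r v 3), (RV.w v 3, RV.r v 4), (RV.w v 4, RV.r v 4),
   (RV.w v 4, RV.r v 5), (RV.w v 5, RV.r v 5), (RV.w v 5, RV.r v 6), (RV.w v 6, RV.r v 6),
   (RV.w v 6, RV.r v 7), (RV.w v 7, RV.r v 7), (RV.w v 7, RV.lf v 5)]

lemma trace7_zig (v : Fin g) (hv : v ∈ Vsol) :
    IsZigZag {q ∈ stArcs G π τ Vsol Vsol Vsol | q.1 ≠ RV.root} (trace7 (v:ℕ)) := by
  refine ⟨by simp [trace7], by simp [trace7], ?_, by simp [trace7, List.Chain']⟩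
  intro a ha
  simp only [trace7, List.mem_cons, List.not_mem_nil, or_false] at ha
  rcases ha with rfl | rfl | rfl | rfl | rfl | rfl | rfl
  · exact ⟨mem5 v, by simp⟩
  · exact ⟨mem6 v (by omega) (by omega) (by simp), by simp⟩
  · exact ⟨mem7 v (i := 1) (by omega) (by omega) (by simp) (by simp), by simp⟩
  · exact ⟨mem6 v (by omega) (by omega) (by simp), by simp⟩
  · exact ⟨mem7 v (i := 2) (by omega) (by omega) (by simp) (by simp), by simp⟩
  · exact ⟨mem6 v (by omega) (by omega) (by simp), by simp⟩
  · exact ⟨mem13 hv, by simp⟩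

lemma trace15_zig (v : Fin g) (hv : v ∉ Vsol) :
    IsZigZag {q ∈ stArcs G π τ Vsol Vsol Vsol | q.1 ≠ RV.root} (trace15 (v:ℕ)) := by
  refine ⟨by simp [trace15], by simp [trace15], ?_, by simp [trace15, List.Chain']⟩
  intro a ha
  simp only [trace15, List.mem_cons, List.not_mem_nil, or_false] at ha
  rcases ha with rfl | rfl | rfl | rfl | rfl | rfl | rfl | rfl | rfl | rfl | rfl | rfl |
    rfl | rfl | rfl
  · exact ⟨mem5 v, by simp⟩
  · exact ⟨mem6 v (by omega) (by omega) (by simp), by simp⟩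
  · exact ⟨mem7 v (i := 1) (by omega) (by omega) (by simp) (by simp), by simp⟩
  · exact ⟨mem6 v (by omega) (by omega) (by simp), by simp⟩
  · exact ⟨mem7 v (i := 2) (by omega) (by omega) (by simp) (by simp), by simp⟩
  · exact ⟨mem6 v (by omega) (by omega) (by simp), by simp⟩
  · exact ⟨mem7 v (i := 3) (by omega) (by omega) (by simp) (fun hh => hv hh.2), by simp⟩
  · exact ⟨mem6 v (by omega) (by omega) (fun hh => hv hh.2), by simp⟩
  · exact ⟨mem7 v (i := 4) (by omega) (by omega) (fun hh => hv hh.2) (by simp), by simp⟩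
  · exact ⟨mem6 v (by omega) (by omega) (by simp), by simp⟩
  · exact ⟨mem7 v (i := 5) (by omega) (by omega) (by simp) (by simp), by simp⟩
  · exact ⟨mem6 v (by omega) (by omega) (by simp), by simp⟩
  · exact ⟨mem7 v (i := 6) (by omega) (by omega) (by simp) (by simp), by simp⟩
  · exact ⟨mem8a v, by simp⟩
  · exact ⟨mem8b v, by simp⟩
lemma force7 (hbij : GoodBijections G π τ) (v : Fin g) (hv : v ∈ Vsol) {l : List (RV × RV)}
    (hzz : IsZigZag {q ∈ stArcs G π τ Vsol Vsol Vsol | q.1 ≠ RV.root} l)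
    (hhead : l.head? = some (RV.r (v:ℕ) 0, RV.r (v:ℕ) 1)) :
    l.length ≤ 7 ∧ ∀ j (hj : j < l.length) (h7 : j < (trace7 (v:ℕ)).length),
      l.get ⟨j, hj⟩ = (trace7 (v:ℕ)).get ⟨j, h7⟩ := by
  obtain ⟨hnil, hnd, hmem, hch⟩ := hzz
  have hch' := List.isChain_iff_getElem.mp hch
  have key : ∀ j (hj : j < l.length), j < 7 ∧
      ∀ (h7 : j < (trace7 (v:ℕ)).length), l.get ⟨j, hj⟩ = (trace7 (v:ℕ)).get ⟨j, h7⟩ := by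
    intro j
    induction j using Nat.strong_induction_on with
    | _ j ih =>
      intro hj
      obtain - | k := j
      · refine ⟨by omega, fun h7 => ?_⟩
        rcases l with - | ⟨hd, tl⟩
        · exact absurd rfl hnil
        · simp only [List.head?_cons, Option.some.injEq] at hhead
          subst hhead
          rfl
      · obtain ⟨hk7, hkeq⟩ := ih k (by omega) (by omega)
        have hsh := hch' k (by omega)
        have hbS := hmem _ (l.get_mem ⟨k+1, hj⟩)
        obtain ⟨hba, hbroot⟩ := hbS
        have hnd1 : l.get ⟨k+1, hj⟩ ≠ l.get ⟨k, by omega⟩ := fun hh => by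
          have h2 := hnd.get_inj_iff.mp hh
          simp only [Fin.mk.injEq] at h2
          omega
        have hnd2 : ∀ (hk1 : 1 ≤ k), l.get ⟨k+1, hj⟩ ≠ l.get ⟨k-1, by omega⟩ := fun hk1 hh => by
          have h2 := hnd.get_inj_iff.mp hh
          simp only [Fin.mk.injEq] at h2
          omega
        have hprev := fun (hk1 : 1 ≤ k) => (ih (k-1) (by omega) (by omega)).2
        interval_cases k
        · -- k = 0
          have hgk : l.get ⟨0, by omega⟩ = (RV.r (v:ℕ) 0, RV.r (v:ℕ) 1) := hkeq (by simp [trace7])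
          have hsh2 : ((RV.r (v:ℕ) 0, RV.r (v:ℕ) 1)).1 = (l.get ⟨0+1, hj⟩).1 ∨ ((RV.r (v:ℕ) 0, RV.r (v:ℕ) 1)).2 = (l.get ⟨0+1, hj⟩).2 := by
            rw [← hgk]
            exact hsh
          rcases hsh2 with h | h
          · have hbe := U1 hbij hba h.symm
            exact absurd (hbe.trans hgk.symm) hnd1
          · rcases U2 hba h.symm with hbe | hbe
            · exact absurd (hbe.trans hgk.symm) hnd1
            · exact ⟨by omega, fun h7 => hbe⟩
        · -- k = 1
          have hgk : l.get ⟨1, by omega⟩ = (RV.w (v:ℕ) 1, RV.r (v:ℕ) 1) := hkeq (by simp [trace7])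
          have hsh2 : ((RV.w (v:ℕ) 1, RV.r (v:ℕ) 1)).1 = (l.get ⟨1+1, hj⟩).1 ∨ ((RV.w (v:ℕ) 1, RV.r (v:ℕ) 1)).2 = (l.get ⟨1+1, hj⟩).2 := by
            rw [← hgk]
            exact hsh
          rcases hsh2 with h | h
          · rcases U3 (i := 1) hba (by omega) (by omega) h.symm with ⟨hbe, hcnd⟩ | ⟨hbe, hcnd, hcnd2⟩ | ⟨hq3, hqv, hbe⟩
            · exact absurd (hbe.trans hgk.symm) hnd1
            · exact ⟨by omega, fun h7 => hbe⟩
            · omega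
          · rcases U2 hba h.symm with hbe | hbe
            · exact absurd (hbe.trans (hprev (by omega) (by simp [trace7])).symm) (hnd2 (by omega))
            · exact absurd (hbe.trans hgk.symm) hnd1
        · -- k = 2
          have hgk : l.get ⟨2, by omega⟩ = (RV.w (v:ℕ) 1, RV.r (v:ℕ) 2) := hkeq (by simp [trace7])
          have hsh2 : ((RV.w (v:ℕ) 1, RV.r (v:ℕ) 2)).1 = (l.get ⟨2+1, hj⟩).1 ∨ ((RV.w (v:ℕ) 1, RV.r (v:ℕ) 2)).2 = (l.get ⟨2+1, hj⟩).2 := by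
            rw [← hgk]
            exact hsh
          rcases hsh2 with h | h
          · rcases U3 (i := 1) hba (by omega) (by omega) h.symm with ⟨hbe, hcnd⟩ | ⟨hbe, hcnd, hcnd2⟩ | ⟨hq3, hqv, hbe⟩
            · exact absurd (hbe.trans (hprev (by omega) (by simp [trace7])).symm) (hnd2 (by omega))
            · exact absurd (hbe.trans hgk.symm) hnd1
            · omega
          · rcases U5 (i := 2) hba (by omega) (by omega) h.symm with ⟨hbe, hcnd, hcnd2⟩ | ⟨hbe, hcnd⟩ | ⟨hq5, hqv, hbe⟩
            · exact absurd (hbe.trans hgk.symm) hnd1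
            · exact ⟨by omega, fun h7 => hbe⟩
            · omega
        · -- k = 3
          have hgk : l.get ⟨3, by omega⟩ = (RV.w (v:ℕ) 2, RV.r (v:ℕ) 2) := hkeq (by simp [trace7])
          have hsh2 : ((RV.w (v:ℕ) 2, RV.r (v:ℕ) 2)).1 = (l.get ⟨3+1, hj⟩).1 ∨ ((RV.w (v:ℕ) 2, RV.r (v:ℕ) 2)).2 = (l.get ⟨3+1, hj⟩).2 := by
            rw [← hgk]
            exact hsh
          rcases hsh2 with h | h
          · rcases U3 (i := 2) hba (by omega) (by omega) h.symm with ⟨hbe, hcnd⟩ | ⟨hbe, hcnd, hcnd2⟩ | ⟨hq3, hqv, hbe⟩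
            · exact absurd (hbe.trans hgk.symm) hnd1
            · exact ⟨by omega, fun h7 => hbe⟩
            · omega
          · rcases U5 (i := 2) hba (by omega) (by omega) h.symm with ⟨hbe, hcnd, hcnd2⟩ | ⟨hbe, hcnd⟩ | ⟨hq5, hqv, hbe⟩
            · exact absurd (hbe.trans (hprev (by omega) (by simp [trace7])).symm) (hnd2 (by omega))
            · exact absurd (hbe.trans hgk.symm) hnd1
            · omega
        · -- k = 4
          have hgk : l.get ⟨4, by omega⟩ = (RV.w (v:ℕ) 2, RV.r (v:ℕ) 3) := hkeq (by simp [trace7])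
          have hsh2 : ((RV.w (v:ℕ) 2, RV.r (v:ℕ) 3)).1 = (l.get ⟨4+1, hj⟩).1 ∨ ((RV.w (v:ℕ) 2, RV.r (v:ℕ) 3)).2 = (l.get ⟨4+1, hj⟩).2 := by
            rw [← hgk]
            exact hsh
          rcases hsh2 with h | h
          · rcases U3 (i := 2) hba (by omega) (by omega) h.symm with ⟨hbe, hcnd⟩ | ⟨hbe, hcnd, hcnd2⟩ | ⟨hq3, hqv, hbe⟩
            · exact absurd (hbe.trans (hprev (by omega) (by simp [trace7])).symm) (hnd2 (by omega))
            · exact absurd (hbe.trans hgk.symm) hnd1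
            · omega
          · rcases U5 (i := 3) hba (by omega) (by omega) h.symm with ⟨hbe, hcnd, hcnd2⟩ | ⟨hbe, hcnd⟩ | ⟨hq5, hqv, hbe⟩
            · exact absurd (hbe.trans hgk.symm) hnd1
            · exact ⟨by omega, fun h7 => hbe⟩
            · omega
        · -- k = 5
          have hgk : l.get ⟨5, by omega⟩ = (RV.w (v:ℕ) 3, RV.r (v:ℕ) 3) := hkeq (by simp [trace7])
          have hsh2 : ((RV.w (v:ℕ) 3, RV.r (v:ℕ) 3)).1 = (l.get ⟨5+1, hj⟩).1 ∨ ((RV.w (v:ℕ) 3, RV.r (v:ℕ) 3)).2 = (l.get ⟨5+1, hj⟩).2 := by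
            rw [← hgk]
            exact hsh
          rcases hsh2 with h | h
          · rcases U3 (i := 3) hba (by omega) (by omega) h.symm with ⟨hbe, hcnd⟩ | ⟨hbe, hcnd, hcnd2⟩ | ⟨hq3, hqv, hbe⟩
            · exact absurd (hbe.trans hgk.symm) hnd1
            · exact absurd ⟨rfl, hv⟩ hcnd2
            · exact ⟨by omega, fun h7 => hbe⟩
          · rcases U5 (i := 3) hba (by omega) (by omega) h.symm with ⟨hbe, hcnd, hcnd2⟩ | ⟨hbe, hcnd⟩ | ⟨hq5, hqv, hbe⟩
            · exact absurd (hbe.trans (hprev (by omega) (by simp [trace7])).symm) (hnd2 (by omega))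
            · exact absurd (hbe.trans hgk.symm) hnd1
            · omega
        · -- k = 6
          have hgk : l.get ⟨6, by omega⟩ = (RV.w (v:ℕ) 3, RV.lf (v:ℕ) 4) := hkeq (by simp [trace7])
          have hsh2 : ((RV.w (v:ℕ) 3, RV.lf (v:ℕ) 4)).1 = (l.get ⟨6+1, hj⟩).1 ∨ ((RV.w (v:ℕ) 3, RV.lf (v:ℕ) 4)).2 = (l.get ⟨6+1, hj⟩).2 := by
            rw [← hgk]
            exact hsh
          rcases hsh2 with h | h
          · rcases U3 (i := 3) hba (by omega) (by omega) h.symm with ⟨hbe, hcnd⟩ | ⟨hbe, hcnd, hcnd2⟩ | ⟨hq3, hqv, hbe⟩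
            · exact absurd (hbe.trans (hprev (by omega) (by simp [trace7])).symm) (hnd2 (by omega))
            · exact absurd ⟨rfl, hv⟩ hcnd2
            · exact absurd (hbe.trans hgk.symm) hnd1
          · rcases U6 (i := 4) hba (by omega) (by omega) h.symm with ⟨hbe, hcnd⟩ | ⟨hq4, hqv, hbe⟩
            · exact absurd ⟨rfl, hv⟩ hcnd
            · exact absurd (hbe.trans hgk.symm) hnd1
  refine ⟨?_, fun j hj h7 => (key j hj).2 h7⟩
  by_contra hlen
  exact absurd (key 7 (by omega)).1 (by omega)

lemma force15 (hbij : GoodBijections G π τ) (v : Fin g) (hv : v ∉ Vsol) {l : List (RV × RV)}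
    (hzz : IsZigZag {q ∈ stArcs G π τ Vsol Vsol Vsol | q.1 ≠ RV.root} l)
    (hhead : l.head? = some (RV.r (v:ℕ) 0, RV.r (v:ℕ) 1)) :
    l.length ≤ 15 ∧ ∀ j (hj : j < l.length) (h7 : j < (trace15 (v:ℕ)).length),
      l.get ⟨j, hj⟩ = (trace15 (v:ℕ)).get ⟨j, h7⟩ := by
  obtain ⟨hnil, hnd, hmem, hch⟩ := hzz
  have hch' := List.isChain_iff_getElem.mp hch
  have key : ∀ j (hj : j < l.length), j < 15 ∧
      ∀ (h7 : j < (trace15 (v:ℕ)).length), l.get ⟨j, hj⟩ = (trace15 (v:ℕ)).get ⟨j, h7⟩ := by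
    intro j
    induction j using Nat.strong_induction_on with
    | _ j ih =>
      intro hj
      obtain - | k := j
      · refine ⟨by omega, fun h7 => ?_⟩
        rcases l with - | ⟨hd, tl⟩
        · exact absurd rfl hnil
        · simp only [List.head?_cons, Option.some.injEq] at hhead
          subst hhead
          rfl
      · obtain ⟨hk7, hkeq⟩ := ih k (by omega) (by omega)
        have hsh := hch' k (by omega)
        have hbS := hmem _ (l.get_mem ⟨k+1, hj⟩)
        obtain ⟨hba, hbroot⟩ := hbS
        have hnd1 : l.get ⟨k+1, hj⟩ ≠ l.get ⟨k, by omega⟩ := fun hh => by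
          have h2 := hnd.get_inj_iff.mp hh
          simp only [Fin.mk.injEq] at h2
          omega
        have hnd2 : ∀ (hk1 : 1 ≤ k), l.get ⟨k+1, hj⟩ ≠ l.get ⟨k-1, by omega⟩ := fun hk1 hh => by
          have h2 := hnd.get_inj_iff.mp hh
          simp only [Fin.mk.injEq] at h2
          omega
        have hprev := fun (hk1 : 1 ≤ k) => (ih (k-1) (by omega) (by omega)).2
        interval_cases k
        · -- k = 0
          have hgk : l.get ⟨0, by omega⟩ = (RV.r (v:ℕ) 0, RV.r (v:ℕ) 1) := hkeq (by simp [trace15])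
          have hsh2 : ((RV.r (v:ℕ) 0, RV.r (v:ℕ) 1)).1 = (l.get ⟨0+1, hj⟩).1 ∨ ((RV.r (v:ℕ) 0, RV.r (v:ℕ) 1)).2 = (l.get ⟨0+1, hj⟩).2 := by
            rw [← hgk]
            exact hsh
          rcases hsh2 with h | h
          · have hbe := U1 hbij hba h.symm
            exact absurd (hbe.trans hgk.symm) hnd1
          · rcases U2 hba h.symm with hbe | hbe
            · exact absurd (hbe.trans hgk.symm) hnd1
            · exact ⟨by omega, fun h7 => hbe⟩
        · -- k = 1
          have hgk : l.get ⟨1, by omega⟩ = (RV.w (v:ℕ) 1, RV.r (v:ℕ) 1) := hkeq (by simp [trace15])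
          have hsh2 : ((RV.w (v:ℕ) 1, RV.r (v:ℕ) 1)).1 = (l.get ⟨1+1, hj⟩).1 ∨ ((RV.w (v:ℕ) 1, RV.r (v:ℕ) 1)).2 = (l.get ⟨1+1, hj⟩).2 := by
            rw [← hgk]
            exact hsh
          rcases hsh2 with h | h
          · rcases U3 (i := 1) hba (by omega) (by omega) h.symm with ⟨hbe, hcnd⟩ | ⟨hbe, hcnd, hcnd2⟩ | ⟨hq3, hqv, hbe⟩
            · exact absurd (hbe.trans hgk.symm) hnd1
            · exact ⟨by omega, fun h7 => hbe⟩
            · omega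
          · rcases U2 hba h.symm with hbe | hbe
            · exact absurd (hbe.trans (hprev (by omega) (by simp [trace15])).symm) (hnd2 (by omega))
            · exact absurd (hbe.trans hgk.symm) hnd1
        · -- k = 2
          have hgk : l.get ⟨2, by omega⟩ = (RV.w (v:ℕ) 1, RV.r (v:ℕ) 2) := hkeq (by simp [trace15])
          have hsh2 : ((RV.w (v:ℕ) 1, RV.r (v:ℕ) 2)).1 = (l.get ⟨2+1, hj⟩).1 ∨ ((RV.w (v:ℕ) 1, RV.r (v:ℕ) 2)).2 = (l.get ⟨2+1, hj⟩).2 := by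
            rw [← hgk]
            exact hsh
          rcases hsh2 with h | h
          · rcases U3 (i := 1) hba (by omega) (by omega) h.symm with ⟨hbe, hcnd⟩ | ⟨hbe, hcnd, hcnd2⟩ | ⟨hq3, hqv, hbe⟩
            · exact absurd (hbe.trans (hprev (by omega) (by simp [trace15])).symm) (hnd2 (by omega))
            · exact absurd (hbe.trans hgk.symm) hnd1
            · omega
          · rcases U5 (i := 2) hba (by omega) (by omega) h.symm with ⟨hbe, hcnd, hcnd2⟩ | ⟨hbe, hcnd⟩ | ⟨hq5, hqv, hbe⟩
            · exact absurd (hbe.trans hgk.symm) hnd1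
            · exact ⟨by omega, fun h7 => hbe⟩
            · omega
        · -- k = 3
          have hgk : l.get ⟨3, by omega⟩ = (RV.w (v:ℕ) 2, RV.r (v:ℕ) 2) := hkeq (by simp [trace15])
          have hsh2 : ((RV.w (v:ℕ) 2, RV.r (v:ℕ) 2)).1 = (l.get ⟨3+1, hj⟩).1 ∨ ((RV.w (v:ℕ) 2, RV.r (v:ℕ) 2)).2 = (l.get ⟨3+1, hj⟩).2 := by
            rw [← hgk]
            exact hsh
          rcases hsh2 with h | h
          · rcases U3 (i := 2) hba (by omega) (by omega) h.symm with ⟨hbe, hcnd⟩ | ⟨hbe, hcnd, hcnd2⟩ | ⟨hq3, hqv, hbe⟩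
            · exact absurd (hbe.trans hgk.symm) hnd1
            · exact ⟨by omega, fun h7 => hbe⟩
            · omega
          · rcases U5 (i := 2) hba (by omega) (by omega) h.symm with ⟨hbe, hcnd, hcnd2⟩ | ⟨hbe, hcnd⟩ | ⟨hq5, hqv, hbe⟩
            · exact absurd (hbe.trans (hprev (by omega) (by simp [trace15])).symm) (hnd2 (by omega))
            · exact absurd (hbe.trans hgk.symm) hnd1
            · omega
        · -- k = 4
          have hgk : l.get ⟨4, by omega⟩ = (RV.w (v:ℕ) 2, RV.r (v:ℕ) 3) := hkeq (by simp [trace15])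
          have hsh2 : ((RV.w (v:ℕ) 2, RV.r (v:ℕ) 3)).1 = (l.get ⟨4+1, hj⟩).1 ∨ ((RV.w (v:ℕ) 2, RV.r (v:ℕ) 3)).2 = (l.get ⟨4+1, hj⟩).2 := by
            rw [← hgk]
            exact hsh
          rcases hsh2 with h | h
          · rcases U3 (i := 2) hba (by omega) (by omega) h.symm with ⟨hbe, hcnd⟩ | ⟨hbe, hcnd, hcnd2⟩ | ⟨hq3, hqv, hbe⟩
            · exact absurd (hbe.trans (hprev (by omega) (by simp [trace15])).symm) (hnd2 (by omega))
            · exact absurd (hbe.trans hgk.symm) hnd1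
            · omega
          · rcases U5 (i := 3) hba (by omega) (by omega) h.symm with ⟨hbe, hcnd, hcnd2⟩ | ⟨hbe, hcnd⟩ | ⟨hq5, hqv, hbe⟩
            · exact absurd (hbe.trans hgk.symm) hnd1
            · exact ⟨by omega, fun h7 => hbe⟩
            · omega
        · -- k = 5
          have hgk : l.get ⟨5, by omega⟩ = (RV.w (v:ℕ) 3, RV.r (v:ℕ) 3) := hkeq (by simp [trace15])
          have hsh2 : ((RV.w (v:ℕ) 3, RV.r (v:ℕ) 3)).1 = (l.get ⟨5+1, hj⟩).1 ∨ ((RV.w (v:ℕ) 3, RV.r (v:ℕ) 3)).2 = (l.get ⟨5+1, hj⟩).2 := by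
            rw [← hgk]
            exact hsh
          rcases hsh2 with h | h
          · rcases U3 (i := 3) hba (by omega) (by omega) h.symm with ⟨hbe, hcnd⟩ | ⟨hbe, hcnd, hcnd2⟩ | ⟨hq3, hqv, hbe⟩
            · exact absurd (hbe.trans hgk.symm) hnd1
            · exact ⟨by omega, fun h7 => hbe⟩
            · exact absurd hqv hv
          · rcases U5 (i := 3) hba (by omega) (by omega) h.symm with ⟨hbe, hcnd, hcnd2⟩ | ⟨hbe, hcnd⟩ | ⟨hq5, hqv, hbe⟩
            · exact absurd (hbe.trans (hprev (by omega) (by simp [trace15])).symm) (hnd2 (by omega))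
            · exact absurd (hbe.trans hgk.symm) hnd1
            · omega
        · -- k = 6
          have hgk : l.get ⟨6, by omega⟩ = (RV.w (v:ℕ) 3, RV.r (v:ℕ) 4) := hkeq (by simp [trace15])
          have hsh2 : ((RV.w (v:ℕ) 3, RV.r (v:ℕ) 4)).1 = (l.get ⟨6+1, hj⟩).1 ∨ ((RV.w (v:ℕ) 3, RV.r (v:ℕ) 4)).2 = (l.get ⟨6+1, hj⟩).2 := by
            rw [← hgk]
            exact hsh
          rcases hsh2 with h | h
          · rcases U3 (i := 3) hba (by omega) (by omega) h.symm with ⟨hbe, hcnd⟩ | ⟨hbe, hcnd, hcnd2⟩ | ⟨hq3, hqv, hbe⟩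
            · exact absurd (hbe.trans (hprev (by omega) (by simp [trace15])).symm) (hnd2 (by omega))
            · exact absurd (hbe.trans hgk.symm) hnd1
            · exact absurd hqv hv
          · rcases U5 (i := 4) hba (by omega) (by omega) h.symm with ⟨hbe, hcnd, hcnd2⟩ | ⟨hbe, hcnd⟩ | ⟨hq5, hqv, hbe⟩
            · exact absurd (hbe.trans hgk.symm) hnd1
            · exact ⟨by omega, fun h7 => hbe⟩
            · omega
        · -- k = 7
          have hgk : l.get ⟨7, by omega⟩ = (RV.w (v:ℕ) 4, RV.r (v:ℕ) 4) := hkeq (by simp [trace15])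
          have hsh2 : ((RV.w (v:ℕ) 4, RV.r (v:ℕ) 4)).1 = (l.get ⟨7+1, hj⟩).1 ∨ ((RV.w (v:ℕ) 4, RV.r (v:ℕ) 4)).2 = (l.get ⟨7+1, hj⟩).2 := by
            rw [← hgk]
            exact hsh
          rcases hsh2 with h | h
          · rcases U3 (i := 4) hba (by omega) (by omega) h.symm with ⟨hbe, hcnd⟩ | ⟨hbe, hcnd, hcnd2⟩ | ⟨hq3, hqv, hbe⟩
            · exact absurd (hbe.trans hgk.symm) hnd1
            · exact ⟨by omega, fun h7 => hbe⟩
            · omega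
          · rcases U5 (i := 4) hba (by omega) (by omega) h.symm with ⟨hbe, hcnd, hcnd2⟩ | ⟨hbe, hcnd⟩ | ⟨hq5, hqv, hbe⟩
            · exact absurd (hbe.trans (hprev (by omega) (by simp [trace15])).symm) (hnd2 (by omega))
            · exact absurd (hbe.trans hgk.symm) hnd1
            · omega
        · -- k = 8
          have hgk : l.get ⟨8, by omega⟩ = (RV.w (v:ℕ) 4, RV.r (v:ℕ) 5) := hkeq (by simp [trace15])
          have hsh2 : ((RV.w (v:ℕ) 4, RV.r (v:ℕ) 5)).1 = (l.get ⟨8+1, hj⟩).1 ∨ ((RV.w (v:ℕ) 4, RV.r (v:ℕ) 5)).2 = (l.get ⟨8+1, hj⟩).2 := by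
            rw [← hgk]
            exact hsh
          rcases hsh2 with h | h
          · rcases U3 (i := 4) hba (by omega) (by omega) h.symm with ⟨hbe, hcnd⟩ | ⟨hbe, hcnd, hcnd2⟩ | ⟨hq3, hqv, hbe⟩
            · exact absurd (hbe.trans (hprev (by omega) (by simp [trace15])).symm) (hnd2 (by omega))
            · exact absurd (hbe.trans hgk.symm) hnd1
            · omega
          · rcases U5 (i := 5) hba (by omega) (by omega) h.symm with ⟨hbe, hcnd, hcnd2⟩ | ⟨hbe, hcnd⟩ | ⟨hq5, hqv, hbe⟩
            · exact absurd (hbe.trans hgk.symm) hnd1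
            · exact ⟨by omega, fun h7 => hbe⟩
            · exact absurd hqv hv
        · -- k = 9
          have hgk : l.get ⟨9, by omega⟩ = (RV.w (v:ℕ) 5, RV.r (v:ℕ) 5) := hkeq (by simp [trace15])
          have hsh2 : ((RV.w (v:ℕ) 5, RV.r (v:ℕ) 5)).1 = (l.get ⟨9+1, hj⟩).1 ∨ ((RV.w (v:ℕ) 5, RV.r (v:ℕ) 5)).2 = (l.get ⟨9+1, hj⟩).2 := by
            rw [← hgk]
            exact hsh
          rcases hsh2 with h | h
          · rcases U3 (i := 5) hba (by omega) (by omega) h.symm with ⟨hbe, hcnd⟩ | ⟨hbe, hcnd, hcnd2⟩ | ⟨hq3, hqv, hbe⟩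
            · exact absurd (hbe.trans hgk.symm) hnd1
            · exact ⟨by omega, fun h7 => hbe⟩
            · omega
          · rcases U5 (i := 5) hba (by omega) (by omega) h.symm with ⟨hbe, hcnd, hcnd2⟩ | ⟨hbe, hcnd⟩ | ⟨hq5, hqv, hbe⟩
            · exact absurd (hbe.trans (hprev (by omega) (by simp [trace15])).symm) (hnd2 (by omega))
            · exact absurd (hbe.trans hgk.symm) hnd1
            · exact absurd hqv hv
        · -- k = 10
          have hgk : l.get ⟨10, by omega⟩ = (RV.w (v:ℕ) 5, RV.r (v:ℕ) 6) := hkeq (by simp [trace15])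
          have hsh2 : ((RV.w (v:ℕ) 5, RV.r (v:ℕ) 6)).1 = (l.get ⟨10+1, hj⟩).1 ∨ ((RV.w (v:ℕ) 5, RV.r (v:ℕ) 6)).2 = (l.get ⟨10+1, hj⟩).2 := by
            rw [← hgk]
            exact hsh
          rcases hsh2 with h | h
          · rcases U3 (i := 5) hba (by omega) (by omega) h.symm with ⟨hbe, hcnd⟩ | ⟨hbe, hcnd, hcnd2⟩ | ⟨hq3, hqv, hbe⟩
            · exact absurd (hbe.trans (hprev (by omega) (by simp [trace15])).symm) (hnd2 (by omega))
            · exact absurd (hbe.trans hgk.symm) hnd1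
            · omega
          · rcases U5 (i := 6) hba (by omega) (by omega) h.symm with ⟨hbe, hcnd, hcnd2⟩ | ⟨hbe, hcnd⟩ | ⟨hq5, hqv, hbe⟩
            · exact absurd (hbe.trans hgk.symm) hnd1
            · exact ⟨by omega, fun h7 => hbe⟩
            · omega
        · -- k = 11
          have hgk : l.get ⟨11, by omega⟩ = (RV.w (v:ℕ) 6, RV.r (v:ℕ) 6) := hkeq (by simp [trace15])
          have hsh2 : ((RV.w (v:ℕ) 6, RV.r (v:ℕ) 6)).1 = (l.get ⟨11+1, hj⟩).1 ∨ ((RV.w (v:ℕ) 6, RV.r (v:ℕ) 6)).2 = (l.get ⟨11+1, hj⟩).2 := by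
            rw [← hgk]
            exact hsh
          rcases hsh2 with h | h
          · rcases U3 (i := 6) hba (by omega) (by omega) h.symm with ⟨hbe, hcnd⟩ | ⟨hbe, hcnd, hcnd2⟩ | ⟨hq3, hqv, hbe⟩
            · exact absurd (hbe.trans hgk.symm) hnd1
            · exact ⟨by omega, fun h7 => hbe⟩
            · omega
          · rcases U5 (i := 6) hba (by omega) (by omega) h.symm with ⟨hbe, hcnd, hcnd2⟩ | ⟨hbe, hcnd⟩ | ⟨hq5, hqv, hbe⟩
            · exact absurd (hbe.trans (hprev (by omega) (by simp [trace15])).symm) (hnd2 (by omega))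
            · exact absurd (hbe.trans hgk.symm) hnd1
            · omega
        · -- k = 12
          have hgk : l.get ⟨12, by omega⟩ = (RV.w (v:ℕ) 6, RV.r (v:ℕ) 7) := hkeq (by simp [trace15])
          have hsh2 : ((RV.w (v:ℕ) 6, RV.r (v:ℕ) 7)).1 = (l.get ⟨12+1, hj⟩).1 ∨ ((RV.w (v:ℕ) 6, RV.r (v:ℕ) 7)).2 = (l.get ⟨12+1, hj⟩).2 := by
            rw [← hgk]
            exact hsh
          rcases hsh2 with h | h
          · rcases U3 (i := 6) hba (by omega) (by omega) h.symm with ⟨hbe, hcnd⟩ | ⟨hbe, hcnd, hcnd2⟩ | ⟨hq3, hqv, hbe⟩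
            · exact absurd (hbe.trans (hprev (by omega) (by simp [trace15])).symm) (hnd2 (by omega))
            · exact absurd (hbe.trans hgk.symm) hnd1
            · omega
          · rcases U5 (i := 7) hba (by omega) (by omega) h.symm with ⟨hbe, hcnd, hcnd2⟩ | ⟨hbe, hcnd⟩ | ⟨hq5, hqv, hbe⟩
            · exact absurd (hbe.trans hgk.symm) hnd1
            · exact ⟨by omega, fun h7 => hbe⟩
            · omega
        · -- k = 13
          have hgk : l.get ⟨13, by omega⟩ = (RV.w (v:ℕ) 7, RV.r (v:ℕ) 7) := hkeq (by simp [trace15])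
          have hsh2 : ((RV.w (v:ℕ) 7, RV.r (v:ℕ) 7)).1 = (l.get ⟨13+1, hj⟩).1 ∨ ((RV.w (v:ℕ) 7, RV.r (v:ℕ) 7)).2 = (l.get ⟨13+1, hj⟩).2 := by
            rw [← hgk]
            exact hsh
          rcases hsh2 with h | h
          · rcases U4 hba h.symm with hbe | hbe
            · exact absurd (hbe.trans hgk.symm) hnd1
            · exact ⟨by omega, fun h7 => hbe⟩
          · rcases U5 (i := 7) hba (by omega) (by omega) h.symm with ⟨hbe, hcnd, hcnd2⟩ | ⟨hbe, hcnd⟩ | ⟨hq5, hqv, hbe⟩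
            · exact absurd (hbe.trans (hprev (by omega) (by simp [trace15])).symm) (hnd2 (by omega))
            · exact absurd (hbe.trans hgk.symm) hnd1
            · omega
        · -- k = 14
          have hgk : l.get ⟨14, by omega⟩ = (RV.w (v:ℕ) 7, RV.lf (v:ℕ) 5) := hkeq (by simp [trace15])
          have hsh2 : ((RV.w (v:ℕ) 7, RV.lf (v:ℕ) 5)).1 = (l.get ⟨14+1, hj⟩).1 ∨ ((RV.w (v:ℕ) 7, RV.lf (v:ℕ) 5)).2 = (l.get ⟨14+1, hj⟩).2 := by
            rw [← hgk]
            exact hsh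
          rcases hsh2 with h | h
          · rcases U4 hba h.symm with hbe | hbe
            · exact absurd (hbe.trans (hprev (by omega) (by simp [trace15])).symm) (hnd2 (by omega))
            · exact absurd (hbe.trans hgk.symm) hnd1
          · have hbe := U7 hba h.symm
            exact absurd (hbe.trans hgk.symm) hnd1
  refine ⟨?_, fun j hj h7 => (key j hj).2 h7⟩
  by_contra hlen
  exact absurd (key 15 (by omega)).1 (by omega)
end
end TB

open RV in
/-- If `V_sol` is a vertex cover of the 3-regular graph `G`, then the network
`N^E_G`, obtained from `N_G` by deleting the arc `w^v_4 r^v_4` for every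
`v ∈ V_sol` (and simplifying), is tree-based: its zig-zag decomposition
contains no W-fence. -/
theorem deleted_network_tree_based {g : ℕ} (G : SimpleGraph (Fin g))
    (π τ : Fin g → Fin g → ℕ)
    (hreg : ThreeRegular G) (hbij : GoodBijections G π τ)
    (Vsol : Set (Fin g)) (hcov : ∀ u v : Fin g, G.Adj u v → u ∈ Vsol ∨ v ∈ Vsol)
    (NE : Net RV)
    (hNE : Net.SimplifiesTo
      ((NG G π τ).delArcs {a | ∃ v ∈ Vsol, a = (RV.w (v : ℕ) 4, RV.r (v : ℕ) 4)}) NE) :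
    ∀ l : List (RV × RV), Net.IsMaximalZigZag NE.nonRootArcs l → ¬ NE.IsWFence l := by

  classical
  obtain ⟨hsteps, hterm⟩ := hNE
  by_cases hg0 : g = 0
  · -- degenerate case g = 0
    subst hg0
    have hroots : ∀ M : Net RV, Relation.ReflTransGen Net.SuppStep
        ((NG G π τ).delArcs {a | ∃ v ∈ Vsol, a = (RV.w (v : ℕ) 4, RV.r (v : ℕ) 4)}) M →
        M.root = RV.root ∧ M.arcs ⊆
          {(RV.root, RV.s 0), (RV.s 0, RV.rho 0), (RV.root, RV.rho 0)} := by
      intro M hM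
      induction hM with
      | refl =>
        refine ⟨rfl, ?_⟩
        rintro q ⟨hq1, -⟩
        rcases hq1 with (hc | hgad) | hint
        · rcases hc with ((rfl | ⟨i, hig, -⟩) | ⟨i, hig, -⟩) | rfl
          · simp
          · omega
          · omega
          · norm_num
        · rw [Set.mem_iUnion] at hgad
          obtain ⟨v, -⟩ := hgad
          exact v.elim0
        · obtain ⟨u, -, -, -⟩ := hint
          exact u.elim0
      | tail hst hstep ih =>
        obtain ⟨ihr, ihs⟩ := ih
        obtain ⟨x, p, c, hxv, hin, hout, hpx, hxc, hr, hv, ha⟩ := hstep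
        refine ⟨hr.trans ihr, ?_⟩
        intro q hq
        rw [ha] at hq
        rcases hq with ⟨hq1, -⟩ | hq1
        · exact ihs hq1
        · rw [Set.mem_singleton_iff] at hq1
          subst hq1
          have h1 := ihs hpx
          have h2 := ihs hxc
          simp only [Set.mem_insert_iff, Set.mem_singleton_iff] at h1 h2 ⊢
          rcases h1 with h1 | h1 | h1 <;> rcases h2 with h2 | h2 | h2 <;>
            rw [Prod.mk.injEq] at h1 h2 <;> obtain ⟨rfl, rfl⟩ := h1 <;>
            simp_all
    obtain ⟨hNEroot, hNEsub⟩ := hroots NE hsteps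
    intro l hmax hW
    obtain ⟨hzz, -⟩ := hmax
    have hlen2 := hW.1
    rcases l with - | ⟨a0, - | ⟨b0, t⟩⟩
    · simp at hlen2
    · simp at hlen2
    · have ha := hzz.2.2.1 a0 (by simp)
      have hb := hzz.2.2.1 b0 (by simp)
      obtain ⟨ha1, ha2⟩ := ha
      obtain ⟨hb1, hb2⟩ := hb
      have ha3 := hNEsub ha1
      have hb3 := hNEsub hb1
      rw [hNEroot] at ha2 hb2
      simp only [Set.mem_insert_iff, Set.mem_singleton_iff] at ha3 hb3
      have hae : a0 = (RV.s 0, RV.rho 0) := by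
        rcases ha3 with rfl | rfl | rfl
        · exact absurd rfl ha2
        · rfl
        · exact absurd rfl ha2
      have hbe : b0 = (RV.s 0, RV.rho 0) := by
        rcases hb3 with rfl | rfl | rfl
        · exact absurd rfl hb2
        · rfl
        · exact absurd rfl hb2
      have hnd := hzz.2.1
      rw [List.nodup_cons] at hnd
      exact hnd.1 (by rw [hae, ← hbe]; exact List.mem_cons_self)
  · -- main case : first g ≥ 4
    have hg4 : 4 ≤ g := by
      by_contra hlt
      push_neg at hlt
      set v0 : Fin g := ⟨0, by omega⟩ with hv0def
      have h3 := hreg v0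
      have hv0 : v0 ∉ G.neighborSet v0 := fun h => G.loopless.irrefl v0 h
      have hss : G.neighborSet v0 ⊂ Set.univ :=
        ⟨Set.subset_univ _, fun hsup => hv0 (hsup (Set.mem_univ v0))⟩
      have hlt2 := Set.ncard_lt_ncard hss (Set.toFinite _)
      rw [h3, Set.ncard_univ, Nat.card_eq_fintype_card, Fintype.card_fin] at hlt2
      omega
    have hreach_gen : ∀ M : Net RV, Relation.ReflTransGen Net.SuppStep
        ((NG G π τ).delArcs {a | ∃ v ∈ Vsol, a = (RV.w (v : ℕ) 4, RV.r (v : ℕ) 4)}) M →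
        ∃ A B : Set (Fin g), A ⊆ Vsol ∧ B ⊆ Vsol ∧
          M.verts = TB.stVerts G π τ A B ∧ M.root = RV.root ∧
          M.arcs = TB.stArcs G π τ Vsol A B := by
      intro M hM
      induction hM with
      | refl =>
        exact ⟨∅, ∅, by simp, by simp, TB.init_verts, rfl, TB.init_arcs⟩
      | tail hst hstep ih =>
        obtain ⟨A, B, hA, hB, h1, h2, h3⟩ := ih
        exact TB.reach_step hbij hg4 hA hB h1 h2 h3 hstep
    obtain ⟨A, B, hA, hB, hNEv, hNEr, hNEa⟩ := hreach_gen NE hsteps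
    obtain ⟨hAV, hBV⟩ := TB.final_AB hbij hA hB hNEv hNEa hterm
    rw [hAV, hBV] at hNEa
    have hNR : NE.nonRootArcs = {q ∈ TB.stArcs G π τ Vsol Vsol Vsol | q.1 ≠ RV.root} := by
      unfold Net.nonRootArcs
      rw [hNEa, hNEr]
    intro l hmax hW
    rw [Net.IsMaximalZigZag, hNR] at hmax
    obtain ⟨hzz, hmaxlen⟩ := hmax
    obtain ⟨hlen2, heven, a, bb, hhead, hlast, hreta, hretb⟩ := hW
    -- the head arc is in the list
    have hal : a ∈ l := List.mem_of_mem_head? hhead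
    obtain ⟨haa, haroot⟩ := hzz.2.2.1 a hal
    -- outdegree 1 of a.1
    have hout1 : {q ∈ TB.stArcs G π τ Vsol Vsol Vsol | q.1 = a.1}.ncard = 1 := by
      rw [← hNEa]
      exact hreta.2.2
    obtain ⟨e, he⟩ := Set.ncard_eq_one.mp hout1
    have hOUT : ∀ q ∈ TB.stArcs G π τ Vsol Vsol Vsol, q.1 = a.1 → q = a := by
      intro q hq h1
      have h2 : q ∈ {q ∈ TB.stArcs G π τ Vsol Vsol Vsol | q.1 = a.1} := ⟨hq, h1⟩
      have h3 : a ∈ {q ∈ TB.stArcs G π τ Vsol Vsol Vsol | q.1 = a.1} := ⟨haa, rfl⟩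
      rw [he, Set.mem_singleton_iff] at h2 h3
      rw [h2, h3]
    -- second arc
    rcases l with - | ⟨a0, - | ⟨b1, t⟩⟩
    · simp at hlen2
    · simp at hlen2
    · simp only [List.head?_cons, Option.some.injEq] at hhead
      subst hhead
      obtain ⟨hb1a, hb1root⟩ := hzz.2.2.1 b1 (by simp)
      have hneq : b1 ≠ a0 := by
        have hnd := hzz.2.1
        rw [List.nodup_cons] at hnd
        exact fun hh => hnd.1 (by rw [← hh]; exact List.mem_cons_self)
      have hab := (List.isChain_cons_cons.mp hzz.2.2.2).1
      rcases hab with hsh | hsh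
      · exact hneq (hOUT b1 hb1a hsh.symm)
      · obtain ⟨v, hav⟩ := TB.classify hbij hg4 haa haroot hOUT hb1a hsh.symm hneq
        subst hav
        by_cases hvV : v ∈ Vsol
        · have hforce := TB.force7 hbij v hvV hzz (by simp)
          have hpre : (RV.r (v:ℕ) 0, RV.r (v:ℕ) 1) :: b1 :: t <+: TB.trace7 (v:ℕ) := by
            have hl7 : (RV.r (v:ℕ) 0, RV.r (v:ℕ) 1) :: b1 :: t =
                (TB.trace7 (v:ℕ)).take (((RV.r (v:ℕ) 0, RV.r (v:ℕ) 1) :: b1 :: t).length) := by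
              apply List.ext_get
              · rw [List.length_take]
                have h7 := hforce.1
                simp [TB.trace7] at h7 ⊢
                omega
              · intro n h1 h2
                simp only [List.get_eq_getElem, List.getElem_take]
                exact hforce.2 n h1 (by
                  have h7 := hforce.1
                  simp [TB.trace7] at h7 ⊢
                  omega)
            rw [hl7]
            exact List.take_prefix _ _
          have hkey := hmaxlen (TB.trace7 (v:ℕ)) (TB.trace7_zig v hvV) (Or.inl hpre.isInfix)
          simp [TB.trace7] at hkey
          simp only [List.length_cons, Nat.even_iff] at heven
          omega
        · have hforce := TB.force15 hbij v hvV hzz (by simp)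
          have hpre : (RV.r (v:ℕ) 0, RV.r (v:ℕ) 1) :: b1 :: t <+: TB.trace15 (v:ℕ) := by
            have hl15 : (RV.r (v:ℕ) 0, RV.r (v:ℕ) 1) :: b1 :: t =
                (TB.trace15 (v:ℕ)).take (((RV.r (v:ℕ) 0, RV.r (v:ℕ) 1) :: b1 :: t).length) := by
              apply List.ext_get
              · rw [List.length_take]
                have h15 := hforce.1
                simp [TB.trace15] at h15 ⊢
                omega
              · intro n h1 h2
                simp only [List.get_eq_getElem, List.getElem_take]
                exact hforce.2 n h1 (by
                  have h15 := hforce.1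
                  simp [TB.trace15] at h15 ⊢
                  omega)
            rw [hl15]
            exact List.take_prefix _ _
          have hkey := hmaxlen (TB.trace15 (v:ℕ)) (TB.trace15_zig v hvV) (Or.inl hpre.isInfix)
          simp [TB.trace15] at hkey
          simp only [List.length_cons, Nat.even_iff] at heven
          omega
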